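/- arXiv:1703.03321 — 8 statements merged into one kernel-verified Lean document; each statement's English description precedes it below -/
import Mathlib

section
/- Let U ⊆ ℝ^m be open, ψ : U → ℝ be C¹, and F(A) = ψ(P₁(A), …, P_m(A)) on Ω = {A : (P₁(A),…,P_m(A)) ∈ U}. Then for every A ∈ Ω and every n×n real matrix B, dF(A)B = Σ_{l=1}^m l · ∂_lψ(P₁(A),…,P_m(A)) · trace(A^{l−1} B) = trace(F'(A) ∘ B), where F'(A) = Σ_{l=1}^m l · ∂_lψ(P₁(A),…,P_m(A)) · A^{l−1}. -/
attribute [local instance] Matrix.normedAddCommGroup Matrix.normedSpace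

/-- `P_k(A) = trace (A ^ k)`, bundled as the vector `(P₁(A), …, P_m(A))`. -/
noncomputable def Pvec (n m : ℕ) (A : Matrix (Fin n) (Fin n) ℝ) : Fin m → ℝ :=
  fun l => (A ^ ((l : ℕ) + 1)).trace

/-- `F'(A) = ∑_{l=1}^m l ∂ψ/∂P_l (P₁(A),…,P_m(A)) A^{l-1}`
(the index `l : Fin m` represents the integer `l + 1 ∈ {1, …, m}`). -/
noncomputable def Fprime (n m : ℕ) (ψ : (Fin m → ℝ) → ℝ) (A : Matrix (Fin n) (Fin n) ℝ) :
    Matrix (Fin n) (Fin n) ℝ :=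
  ∑ l : Fin m,
    (((l : ℕ) + 1 : ℝ) * fderiv ℝ ψ (Pvec n m A) (Pi.single l 1)) • A ^ (l : ℕ)

section Aux

variable {n : ℕ}

local notation "M" => Matrix (Fin n) (Fin n) ℝ

/-- trace as a continuous linear map. -/
noncomputable def trCLM (n : ℕ) : Matrix (Fin n) (Fin n) ℝ →L[ℝ] ℝ :=
  LinearMap.toContinuousLinearMap (Matrix.traceLinearMap (Fin n) ℝ ℝ)

@[simp] lemma trCLM_apply (X : M) : trCLM n X = X.trace := rfl

/-- matrix multiplication as a continuous bilinear map. -/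
noncomputable def mulCLM (n : ℕ) :
    Matrix (Fin n) (Fin n) ℝ →L[ℝ] Matrix (Fin n) (Fin n) ℝ →L[ℝ] Matrix (Fin n) (Fin n) ℝ :=
  LinearMap.toContinuousLinearMap
    { toFun := fun X => LinearMap.toContinuousLinearMap (LinearMap.mulLeft ℝ X)
      map_add' := by
        intro X Y; ext B
        simp [LinearMap.mulLeft_apply, add_mul]
      map_smul' := by
        intro c X; ext B
        simp [LinearMap.mulLeft_apply, smul_mul_assoc] }

@[simp] lemma mulCLM_apply (X B : M) : mulCLM n X B = X * B := rfl

/-- the derivative of `X ↦ X ^ k` at `A`. -/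
noncomputable def powD (A : M) (k : ℕ) : Matrix (Fin n) (Fin n) ℝ →L[ℝ] Matrix (Fin n) (Fin n) ℝ :=
  LinearMap.toContinuousLinearMap
    { toFun := fun B => ∑ i ∈ Finset.range k, A ^ i * B * A ^ (k - 1 - i)
      map_add' := by
        intro B C
        rw [← Finset.sum_add_distrib]
        refine Finset.sum_congr rfl fun i _ => ?_
        rw [mul_add, add_mul]
      map_smul' := by
        intro c B
        simp only [RingHom.id_apply, Finset.smul_sum, mul_smul_comm, smul_mul_assoc] }

@[simp] lemma powD_apply (A : M) (k : ℕ) (B : M) :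
    powD A k B = ∑ i ∈ Finset.range k, A ^ i * B * A ^ (k - 1 - i) := rfl

lemma hasFDerivAt_matPow (A : M) : ∀ k : ℕ, HasFDerivAt (fun X : M => X ^ k) (powD A k) A := by
  intro k
  induction k with
  | zero =>
    have : (powD A 0 : Matrix (Fin n) (Fin n) ℝ →L[ℝ] Matrix (Fin n) (Fin n) ℝ) = 0 := by
      ext B; simp
    rw [this]
    simpa using (hasFDerivAt_const (1 : M) A)
  | succ k ih =>
    have heq : HasFDerivAt (fun X : M => X ^ k * X)
        (((mulCLM n).isBoundedBilinearMap.deriv (A ^ k, A)).comp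
          ((powD A k).prod (ContinuousLinearMap.id ℝ M))) A := by
      exact HasFDerivAt.comp (f := fun X : M => (X ^ k, X)) A
        ((mulCLM n).isBoundedBilinearMap.hasFDerivAt (A ^ k, A))
        (ih.prodMk (hasFDerivAt_id A))
    have : (fun X : M => X ^ (k + 1)) = fun X : M => X ^ k * X := by
      funext X; rw [pow_succ]
    rw [this]
    refine heq.congr_fderiv (Eq.symm ?_)
    ext B : 1
    show ∑ i ∈ Finset.range (k + 1), A ^ i * B * A ^ (k + 1 - 1 - i) =
      A ^ k * B + (∑ i ∈ Finset.range k, A ^ i * B * A ^ (k - 1 - i)) * A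
    rw [Finset.sum_range_succ]
    have h1 : A ^ k * B * A ^ (k + 1 - 1 - k) = A ^ k * B := by
      simp
    rw [h1, Finset.sum_mul]
    have h2 : ∀ i ∈ Finset.range k, A ^ i * B * A ^ (k + 1 - 1 - i) =
        A ^ i * B * A ^ (k - 1 - i) * A := by
      intro i hi
      rw [Finset.mem_range] at hi
      have e : k + 1 - 1 - i = (k - 1 - i) + 1 := by omega
      rw [e, pow_succ, ← mul_assoc]
    rw [Finset.sum_congr rfl h2, add_comm]

lemma hasFDerivAt_tracePow (A : M) (k : ℕ) :
    HasFDerivAt (fun X : M => (X ^ (k + 1)).trace)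
      ((((k : ℝ) + 1) • ((trCLM n).comp (mulCLM n (A ^ k))))) A := by
  have h := (trCLM n).hasFDerivAt.comp A (hasFDerivAt_matPow A (k + 1))
  refine h.congr_fderiv (Eq.symm ?_)
  ext B
  simp only [ContinuousLinearMap.coe_smul', Pi.smul_apply, ContinuousLinearMap.coe_comp',
    Function.comp_apply, mulCLM_apply, trCLM_apply, powD_apply, smul_eq_mul]
  show ((k : ℝ) + 1) * (A ^ k * B).trace =
    (∑ i ∈ Finset.range (k + 1), A ^ i * B * A ^ (k + 1 - 1 - i)).trace
  rw [Matrix.trace_sum]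
  have h2 : ∀ i ∈ Finset.range (k + 1), (A ^ i * B * A ^ (k + 1 - 1 - i)).trace =
      (A ^ k * B).trace := by
    intro i hi
    rw [Finset.mem_range] at hi
    rw [Matrix.trace_mul_cycle, ← pow_add]
    have : k + 1 - 1 - i + i = k := by omega
    rw [this]
  rw [Finset.sum_congr rfl h2, Finset.sum_const, Finset.card_range, nsmul_eq_mul]
  push_cast
  ring

end Aux

/-- For `ψ : U → ℝ` of class `C¹` on the open set `U ⊆ ℝ^m` and the
associated operator function `F(A) = ψ (P₁(A), …, P_m(A))` on `Ω = {A | Pvec A ∈ U}`,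
the Fréchet derivative at `A ∈ Ω` in direction `B` is
`dF(A)B = ∑_{l=1}^m l ∂_lψ(P(A)) trace (A^{l-1} B) = trace (F'(A) * B)`. -/
theorem stmt_3 (n m : ℕ) (U : Set (Fin m → ℝ)) (hU : IsOpen U)
    (ψ : (Fin m → ℝ) → ℝ) (hψ : ContDiffOn ℝ 1 ψ U)
    (A : Matrix (Fin n) (Fin n) ℝ) (hA : Pvec n m A ∈ U) :
    ∀ B : Matrix (Fin n) (Fin n) ℝ,
      fderiv ℝ (fun X : Matrix (Fin n) (Fin n) ℝ => ψ (Pvec n m X)) A B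
          = ∑ l : Fin m,
              ((l : ℕ) + 1 : ℝ) * fderiv ℝ ψ (Pvec n m A) (Pi.single l 1)
                * (A ^ (l : ℕ) * B).trace ∧
      fderiv ℝ (fun X : Matrix (Fin n) (Fin n) ℝ => ψ (Pvec n m X)) A B
          = (Fprime n m ψ A * B).trace := by
  intro B
  -- derivative of Pvec
  have hP : HasFDerivAt (Pvec n m)
      (ContinuousLinearMap.pi fun l : Fin m =>
        (((l : ℕ) : ℝ) + 1) • ((trCLM n).comp (mulCLM n (A ^ (l : ℕ))))) A := by
    rw [show Pvec n m = fun X l => (X ^ ((l : ℕ) + 1)).trace from rfl]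
    exact hasFDerivAt_pi.2 fun l => hasFDerivAt_tracePow A (l : ℕ)
  -- derivative of ψ
  have hψA : DifferentiableAt ℝ ψ (Pvec n m A) :=
    (hψ.differentiableOn one_ne_zero).differentiableAt (hU.mem_nhds hA)
  have hcomp : HasFDerivAt (fun X : Matrix (Fin n) (Fin n) ℝ => ψ (Pvec n m X))
      ((fderiv ℝ ψ (Pvec n m A)).comp
        (ContinuousLinearMap.pi fun l : Fin m =>
          (((l : ℕ) : ℝ) + 1) • ((trCLM n).comp (mulCLM n (A ^ (l : ℕ)))))) A :=
    hψA.hasFDerivAt.comp A hP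
  have key : fderiv ℝ (fun X : Matrix (Fin n) (Fin n) ℝ => ψ (Pvec n m X)) A B
      = ∑ l : Fin m,
          ((l : ℕ) + 1 : ℝ) * fderiv ℝ ψ (Pvec n m A) (Pi.single l 1)
            * (A ^ (l : ℕ) * B).trace := by
    rw [hcomp.fderiv]
    simp only [ContinuousLinearMap.coe_comp', Function.comp_apply]
    have hx := LinearMap.pi_apply_eq_sum_univ
      ((fderiv ℝ ψ (Pvec n m A)) : (Fin m → ℝ) →ₗ[ℝ] ℝ)
      ((ContinuousLinearMap.pi fun l : Fin m =>
        (((l : ℕ) : ℝ) + 1) • ((trCLM n).comp (mulCLM n (A ^ (l : ℕ))))) B)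
    simp only [ContinuousLinearMap.coe_coe] at hx
    rw [hx]
    refine Finset.sum_congr rfl fun l _ => ?_
    have hsingle : (fun j => if l = j then (1 : ℝ) else 0) = Pi.single l 1 := by
      funext j
      rw [Pi.single_apply]
      simp [eq_comm]
    simp only [ContinuousLinearMap.coe_coe, ContinuousLinearMap.pi_apply,
      ContinuousLinearMap.coe_smul', Pi.smul_apply, ContinuousLinearMap.coe_comp',
      Function.comp_apply, mulCLM_apply, trCLM_apply, smul_eq_mul, hsingle]
    ring
  refine ⟨key, ?_⟩
  rw [key, Fprime, Finset.sum_mul, Matrix.trace_sum]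
  refine Finset.sum_congr rfl fun l _ => ?_
  rw [Matrix.smul_mul, Matrix.trace_smul, smul_eq_mul]
end

section
/- Let U ⊆ ℝ^m be open, ψ : U → ℝ be C¹, f(κ) = ψ(p₁(κ), …, p_m(κ)) for κ with (p₁(κ),…,p_m(κ)) ∈ U, and for an n×n real matrix A with (P₁(A),…,P_m(A)) ∈ U set F'(A) = Σ_{l=1}^m l · ∂_lψ(P₁(A),…,P_m(A)) · A^{l−1}. If A is diagonalisable with S⁻¹AS = diag(κ₁,…,κₙ), then S⁻¹F'(A)S = diag(∂f/∂κ₁(κ), …, ∂f/∂κₙ(κ)); in particular F'(A) and A are simultaneously diagonalisable and the eigenvalue of F'(A) on the i-th eigenvector of A is ∂f/∂κᵢ(κ). -/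
attribute [local instance] Matrix.normedAddCommGroup Matrix.normedSpace

/-- `p_k(κ) = ∑ i, κ i ^ k`, bundled as the vector `(p₁(κ), …, p_m(κ))`. -/
def pvec (n m : ℕ) (κ : Fin n → ℝ) : Fin m → ℝ :=
  fun l => ∑ i, κ i ^ ((l : ℕ) + 1)

open ContinuousLinearMap in
theorem hasFDerivAt_pvec (n m : ℕ) (κ : Fin n → ℝ) :
    HasFDerivAt (pvec n m)
      ((ContinuousLinearMap.pi fun l : Fin m =>
        ∑ j : Fin n, ((((l : ℕ) + 1 : ℝ)) * κ j ^ (l : ℕ)) • (proj j : (Fin n → ℝ) →L[ℝ] ℝ) :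
          (Fin n → ℝ) →L[ℝ] (Fin m → ℝ))) κ := by
  apply hasFDerivAt_pi''
  intro l
  rw [ContinuousLinearMap.proj_pi]
  have : ∀ j : Fin n, HasFDerivAt (fun x : Fin n → ℝ => x j ^ ((l : ℕ) + 1))
      (((((l : ℕ) + 1 : ℝ)) * κ j ^ (l : ℕ)) • (proj j : (Fin n → ℝ) →L[ℝ] ℝ)) κ := by
    intro j
    have := (hasDerivAt_pow ((l : ℕ) + 1) (κ j)).comp_hasFDerivAt κ
      (hasFDerivAt_apply (𝕜 := ℝ) j κ)
    simpa [Function.comp_def] using this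
  exact HasFDerivAt.fun_sum (fun j _ => this j)


/-- Let `ψ` be `C¹` on the open `U ⊆ ℝ^m`, `f(κ) = ψ (p₁(κ),…,p_m(κ))`,
and `F'(A) = ∑ l ∂_lψ(P(A)) A^{l-1}`. If `S⁻¹ A S = diagonal κ` then
`S⁻¹ F'(A) S = diagonal (∂f/∂κ₁(κ), …, ∂f/∂κₙ(κ))`; in particular `F'(A)` and `A` are
simultaneously diagonalisable and the eigenvalue of `F'(A)` on the `i`-th eigenvector
of `A` is `∂f/∂κᵢ(κ)`. -/
theorem stmt_4 (n m : ℕ) (U : Set (Fin m → ℝ)) (hU : IsOpen U)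
    (ψ : (Fin m → ℝ) → ℝ) (hψ : ContDiffOn ℝ 1 ψ U)
    (κ : Fin n → ℝ) (hκ : pvec n m κ ∈ U)
    (A : Matrix (Fin n) (Fin n) ℝ) (hA : Pvec n m A ∈ U)
    (S : Matrix (Fin n) (Fin n) ℝ) (hS : IsUnit S)
    (hdiag : S⁻¹ * A * S = Matrix.diagonal κ) :
    S⁻¹ * Fprime n m ψ A * S
      = Matrix.diagonal (fun i =>
          fderiv ℝ (fun x : Fin n → ℝ => ψ (pvec n m x)) κ (Pi.single i 1)) := by
  have hdet : IsUnit S.det := (Matrix.isUnit_iff_isUnit_det S).mp hS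
  have hSS : S * S⁻¹ = 1 := Matrix.mul_nonsing_inv S hdet
  have hSS' : S⁻¹ * S = 1 := Matrix.nonsing_inv_mul S hdet
  -- conjugation of powers
  have key : ∀ k : ℕ, S⁻¹ * A ^ k * S = (Matrix.diagonal κ) ^ k := by
    intro k
    induction k with
    | zero => simpa using hSS'
    | succ k ih =>
      rw [pow_succ, pow_succ, ← ih, ← hdiag]
      simp only [Matrix.mul_assoc]
      rw [show S * (S⁻¹ * (A * S)) = A * S from by
        rw [← Matrix.mul_assoc, hSS, Matrix.one_mul]]
  -- traces agree
  have hPA : Pvec n m A = pvec n m κ := by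
    funext l
    have h1 : (S⁻¹ * A ^ ((l : ℕ) + 1) * S).trace = (A ^ ((l : ℕ) + 1)).trace := by
      rw [Matrix.trace_mul_cycle, hSS, Matrix.one_mul]
    rw [Pvec, ← h1, key, Matrix.diagonal_pow, Matrix.trace_diagonal]
    rfl
  -- chain rule
  have hψd : DifferentiableAt ℝ ψ (pvec n m κ) :=
    (hψ.contDiffAt (hU.mem_nhds hκ)).differentiableAt one_ne_zero
  set Lψ := fderiv ℝ ψ (pvec n m κ) with hLψ
  set Lg : (Fin n → ℝ) →L[ℝ] (Fin m → ℝ) := ContinuousLinearMap.pi fun l : Fin m =>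
      ∑ j : Fin n, ((((l : ℕ) + 1 : ℝ)) * κ j ^ (l : ℕ)) • ContinuousLinearMap.proj j with hLg
  have hg := hasFDerivAt_pvec n m κ
  have hcomp : HasFDerivAt (fun x : Fin n → ℝ => ψ (pvec n m x)) (Lψ.comp Lg) κ :=
    hψd.hasFDerivAt.comp κ hg
  have hfder : fderiv ℝ (fun x : Fin n → ℝ => ψ (pvec n m x)) κ = Lψ.comp Lg := hcomp.fderiv
  -- value of Lg on Pi.single i 1
  have hLgval : ∀ i : Fin n, Lg (Pi.single i 1) =
      fun l : Fin m => (((l : ℕ) + 1 : ℝ)) * κ i ^ (l : ℕ) := by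
    intro i
    funext l
    simp [hLg, ContinuousLinearMap.pi_apply, ContinuousLinearMap.sum_apply,
      ContinuousLinearMap.proj_apply, Pi.single_apply, Finset.sum_ite_eq',
      mul_ite, mul_zero, mul_one]
  have hRHS : ∀ i : Fin n,
      fderiv ℝ (fun x : Fin n → ℝ => ψ (pvec n m x)) κ (Pi.single i 1)
        = ∑ l : Fin m, (((l : ℕ) + 1 : ℝ)) * κ i ^ (l : ℕ) * Lψ (Pi.single l 1) := by
    intro i
    rw [hfder]
    simp only [ContinuousLinearMap.comp_apply, hLgval i]
    have hvec : (fun l : Fin m => (((l : ℕ) + 1 : ℝ)) * κ i ^ (l : ℕ))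
        = ∑ l : Fin m, ((((l : ℕ) + 1 : ℝ)) * κ i ^ (l : ℕ)) •
            (Pi.single l 1 : Fin m → ℝ) := by
      funext l'
      simp [Pi.single_apply, Finset.sum_ite_eq']
    rw [hvec, map_sum]
    simp [smul_eq_mul]
  -- compute LHS
  rw [Fprime, hPA, Matrix.mul_sum, Finset.sum_mul]
  have hterm : ∀ l : Fin m,
      S⁻¹ * ((((l : ℕ) + 1 : ℝ) * Lψ (Pi.single l 1)) • A ^ (l : ℕ)) * S
        = (((l : ℕ) + 1 : ℝ) * Lψ (Pi.single l 1)) • Matrix.diagonal (fun i => κ i ^ (l : ℕ)) := by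
    intro l
    rw [Matrix.mul_smul, Matrix.smul_mul, key, Matrix.diagonal_pow]
    rfl
  rw [Finset.sum_congr rfl (fun l _ => hterm l)]
  ext i j
  rcases eq_or_ne i j with rfl | hij
  · simp [Matrix.sum_apply, Matrix.diagonal_apply_eq, hRHS i]
    ring_nf
    congr 1
    funext l
    ring
  · simp [Matrix.sum_apply, Matrix.diagonal_apply_ne _ hij]
end

section
/- Let k ≥ 2 and let A = diag(κ₁,…,κₙ) be a diagonal n×n real matrix. Then for every n×n real matrix η, the second Fréchet derivative of P_k(A) = trace(A^k) satisfies d²P_k(A)(η,η) = k(k−1) · Σ_{i=1}^n κᵢ^{k−2} (η_{ii})² + k · Σ_{i≠j} (Σ_{l=1}^{k−1} κᵢ^{l−1} κⱼ^{k−1−l}) η_{ij} η_{ji}; moreover, whenever κᵢ ≠ κⱼ the coefficient k · Σ_{l=1}^{k−1} κᵢ^{l−1} κⱼ^{k−1−l} equals (∂p_k/∂κᵢ(κ) − ∂p_k/∂κⱼ(κ))/(κᵢ − κⱼ) = k(κᵢ^{k−1} − κⱼ^{k−1})/(κᵢ − κⱼ). -/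
attribute [local instance] Matrix.normedAddCommGroup Matrix.normedSpace

attribute [local instance 2000] Matrix.normedAddCommGroup Matrix.normedSpace

section

attribute [local instance 10] instTopologicalSpaceMatrix Matrix.instUniformSpace

open Matrix Finset

variable (n : ℕ)

local notation "M" => Matrix (Fin n) (Fin n) ℝ

noncomputable def mulL : M →L[ℝ] M →L[ℝ] M :=
  LinearMap.toContinuousLinearMap
  { toFun := fun A => LinearMap.toContinuousLinearMap (LinearMap.mulLeft ℝ A)
    map_add' := fun A B => by ext η; simp [add_mul]
    map_smul' := fun c A => by ext η; simp [smul_mul_assoc] }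

@[simp] lemma mulL_apply (A B : M) : mulL n A B = A * B := rfl

noncomputable def traceL : M →L[ℝ] ℝ :=
  LinearMap.toContinuousLinearMap (Matrix.traceLinearMap (Fin n) ℝ ℝ)

@[simp] lemma traceL_apply (A : M) : traceL n A = A.trace := rfl

noncomputable def Dpow (m : ℕ) (X : M) : M →L[ℝ] M :=
  ∑ l ∈ Finset.range m, (mulL n (X ^ l)).comp ((mulL n).flip (X ^ (m - 1 - l)))

lemma Dpow_apply (m : ℕ) (X η : M) :
    Dpow n m X η = ∑ l ∈ Finset.range m, X ^ l * (η * X ^ (m - 1 - l)) := by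
  simp [Dpow]

lemma hasFDerivAt_pow_M (m : ℕ) (X : M) :
    HasFDerivAt (fun Y : M => Y ^ m) (Dpow n m X) X := by
  induction m with
  | zero => simpa [Dpow] using hasFDerivAt_const (1 : M) X
  | succ m ih =>
    have hc : HasFDerivAt (fun Y : M => mulL n (Y ^ m)) ((mulL n).comp (Dpow n m X)) X :=
      ((mulL n).hasFDerivAt).comp X ih
    have h := hc.clm_apply (hasFDerivAt_id X)
    have hD : Dpow n (m + 1) X
        = (mulL n (X ^ m)).comp (ContinuousLinearMap.id ℝ _)
          + ((mulL n).comp (Dpow n m X)).flip X := by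
      ext η
      simp only [Dpow, ContinuousLinearMap.add_apply, ContinuousLinearMap.coe_sum',
        Finset.sum_apply, ContinuousLinearMap.coe_comp', Function.comp_apply,
        ContinuousLinearMap.flip_apply, mulL_apply, ContinuousLinearMap.coe_id', id_eq,
        Finset.sum_range_succ]
      rw [Finset.sum_mul]
      have : ∀ l ∈ Finset.range m, X ^ l * (η * X ^ (m + 1 - 1 - l))
          = X ^ l * (η * X ^ (m - 1 - l)) * X := by
        intro l hl
        rw [Finset.mem_range] at hl
        have h1 : m + 1 - 1 - l = (m - 1 - l) + 1 := by omega
        rw [h1, pow_succ]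
        simp [mul_assoc]
      rw [Finset.sum_congr rfl this]
      simp [add_comm]
    have hfun : (fun Y : M => Y ^ (m + 1)) = fun Y => mulL n (Y ^ m) (id Y) := by
      funext Y; simp [pow_succ]
    rw [hD, hfun]
    exact h

noncomputable def TL : M →L[ℝ] (M →L[ℝ] ℝ) :=
  (ContinuousLinearMap.compL ℝ M M ℝ (traceL n)).comp (mulL n)

@[simp] lemma TL_apply (P η : M) : TL n P η = (P * η).trace := rfl

lemma hasFDerivAt_G (k : ℕ) (A : M) :
    HasFDerivAt (fun X : M => (traceL n).comp (Dpow n k X))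
      (∑ l ∈ Finset.range k,
        ((ContinuousLinearMap.compL ℝ M M ℝ ((TL n) (A ^ l))).comp
            (((mulL n).flip).comp (Dpow n (k - 1 - l) A))
          + ((ContinuousLinearMap.compL ℝ M M ℝ).flip ((mulL n).flip (A ^ (k - 1 - l)))).comp
            ((TL n).comp (Dpow n l A)))) A := by
  have hfun : (fun X : M => (traceL n).comp (Dpow n k X))
      = fun X => ∑ l ∈ Finset.range k,
          ((TL n) (X ^ l)).comp ((mulL n).flip (X ^ (k - 1 - l))) := by
    funext X; ext η
    simp [Dpow, Finset.mul_sum, Finset.sum_mul, mul_assoc]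
  rw [hfun]
  apply HasFDerivAt.fun_sum
  intro l _
  have hc : HasFDerivAt (fun X : M => (TL n) (X ^ l)) ((TL n).comp (Dpow n l A)) A :=
    ((TL n).hasFDerivAt).comp A (hasFDerivAt_pow_M n l A)
  have hd : HasFDerivAt (fun X : M => (mulL n).flip (X ^ (k - 1 - l)))
      (((mulL n).flip).comp (Dpow n (k - 1 - l) A)) A :=
    (((mulL n).flip).hasFDerivAt).comp A (hasFDerivAt_pow_M n (k - 1 - l) A)
  exact hc.clm_comp hd


-- scalar lemmas

lemma sumA (k : ℕ) (x y : ℝ) :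
    ∑ l ∈ Finset.range k, ∑ a ∈ Finset.range l, x ^ (a + (k-1-l)) * y ^ (l-1-a)
      = ∑ b ∈ Finset.range (k-1), ((k-1-b : ℕ) : ℝ) * (x ^ (k-2-b) * y ^ b) := by
  have hR : ∀ b ∈ Finset.range (k-1), ((k-1-b : ℕ) : ℝ) * (x ^ (k-2-b) * y ^ b)
      = ∑ _a ∈ Finset.range (k-1-b), x ^ (k-2-b) * y ^ b := by
    intro b _; rw [Finset.sum_const, nsmul_eq_mul, Finset.card_range]
  rw [Finset.sum_congr rfl hR, Finset.sum_sigma', Finset.sum_sigma']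
  refine Finset.sum_nbij' (fun p => ⟨p.1 - 1 - p.2, p.2⟩) (fun p => ⟨p.2 + p.1 + 1, p.2⟩)
    ?_ ?_ ?_ ?_ ?_
  · rintro ⟨l, a⟩ h
    simp only [Finset.mem_sigma, Finset.mem_range] at h ⊢
    omega
  · rintro ⟨b, a⟩ h
    simp only [Finset.mem_sigma, Finset.mem_range] at h ⊢
    omega
  · rintro ⟨l, a⟩ h
    simp only [Finset.mem_sigma, Finset.mem_range] at h
    exact Sigma.ext (show a + (l-1-a) + 1 = l by omega) (heq_of_eq rfl)
  · rintro ⟨b, a⟩ h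
    simp only [Finset.mem_sigma, Finset.mem_range] at h
    exact Sigma.ext (show a + b + 1 - 1 - a = b by omega) (heq_of_eq rfl)
  · rintro ⟨l, a⟩ h
    simp only [Finset.mem_sigma, Finset.mem_range] at h
    have h1 : a + (k-1-l) = k-2-(l-1-a) := by omega
    rw [h1]

lemma sumB (k : ℕ) (x y : ℝ) :
    ∑ l ∈ Finset.range k, ∑ b ∈ Finset.range (k-1-l), x ^ (l + (k-1-l-1-b)) * y ^ b
      = ∑ b ∈ Finset.range (k-1), ((k-1-b : ℕ) : ℝ) * (x ^ (k-2-b) * y ^ b) := by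
  have hR : ∀ b ∈ Finset.range (k-1), ((k-1-b : ℕ) : ℝ) * (x ^ (k-2-b) * y ^ b)
      = ∑ _l ∈ Finset.range (k-1-b), x ^ (k-2-b) * y ^ b := by
    intro b _; rw [Finset.sum_const, nsmul_eq_mul, Finset.card_range]
  rw [Finset.sum_congr rfl hR, Finset.sum_sigma', Finset.sum_sigma']
  refine Finset.sum_nbij' (fun p => ⟨p.2, p.1⟩) (fun p => ⟨p.2, p.1⟩) ?_ ?_ ?_ ?_ ?_
  · rintro ⟨l, b⟩ h
    simp only [Finset.mem_sigma, Finset.mem_range] at h ⊢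
    omega
  · rintro ⟨b, l⟩ h
    simp only [Finset.mem_sigma, Finset.mem_range] at h ⊢
    omega
  · rintro ⟨l, b⟩ _; rfl
  · rintro ⟨b, l⟩ _; rfl
  · rintro ⟨l, b⟩ h
    simp only [Finset.mem_sigma, Finset.mem_range] at h
    have h1 : l + (k-1-l-1-b) = k-2-b := by omega
    rw [h1]

lemma sumE (k : ℕ) (hk : 2 ≤ k) (x y : ℝ) :
    (∑ b ∈ Finset.range (k-1), ((k-1-b : ℕ) : ℝ) * (x ^ (k-2-b) * y ^ b))
      + (∑ b ∈ Finset.range (k-1), ((k-1-b : ℕ) : ℝ) * (y ^ (k-2-b) * x ^ b))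
    = (k : ℝ) * ∑ l ∈ Finset.range (k-1), x ^ l * y ^ (k-2-l) := by
  have h2 : (∑ b ∈ Finset.range (k-1), ((k-1-b : ℕ) : ℝ) * (y ^ (k-2-b) * x ^ b))
      = ∑ b ∈ Finset.range (k-1), ((b+1 : ℕ) : ℝ) * (x ^ (k-2-b) * y ^ b) := by
    rw [← Finset.sum_range_reflect (fun b => ((k-1-b : ℕ) : ℝ) * (y ^ (k-2-b) * x ^ b)) (k-1)]
    refine Finset.sum_congr rfl fun b hb => ?_
    rw [Finset.mem_range] at hb
    have e1 : k-1-(k-1-1-b) = b+1 := by omega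
    have e2 : k-2-(k-1-1-b) = b := by omega
    have e3 : k-1-1-b = k-2-b := by omega
    rw [e1, e2, e3]
    ring
  have h3 : (k : ℝ) * ∑ l ∈ Finset.range (k-1), x ^ l * y ^ (k-2-l)
      = (k : ℝ) * ∑ b ∈ Finset.range (k-1), x ^ (k-2-b) * y ^ b := by
    rw [← Finset.sum_range_reflect (fun l => x ^ l * y ^ (k-2-l)) (k-1)]
    congr 1
    refine Finset.sum_congr rfl fun b hb => ?_
    rw [Finset.mem_range] at hb
    have e1 : k-1-1-b = k-2-b := by omega
    have e2 : k-2-(k-1-1-b) = b := by omega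
    rw [e2, e1]
  rw [h2, h3, ← Finset.sum_add_distrib, Finset.mul_sum]
  refine Finset.sum_congr rfl fun b hb => ?_
  rw [Finset.mem_range] at hb
  have e1 : ((k-1-b : ℕ) : ℝ) = (k : ℝ) - 1 - b := by
    have : (k-1-b : ℕ) = k - (1+b) := by omega
    rw [this, Nat.cast_sub (by omega)]
    push_cast; ring
  rw [e1]
  push_cast
  ring


lemma tr5 (u v w : Fin n → ℝ) (η : M) :
    (Matrix.diagonal u * (η * (Matrix.diagonal v * (η * Matrix.diagonal w)))).trace
      = ∑ i, ∑ j, u i * η i j * v j * η j i * w i := by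
  have entry : ∀ i, (Matrix.diagonal u * (η * (Matrix.diagonal v * (η * Matrix.diagonal w)))) i i
      = ∑ j, u i * η i j * v j * η j i * w i := by
    intro i
    rw [Matrix.diagonal_mul, Matrix.mul_apply, Finset.mul_sum]
    refine Finset.sum_congr rfl fun j _ => ?_
    rw [Matrix.diagonal_mul, Matrix.mul_diagonal]
    ring
  rw [Matrix.trace]
  exact Finset.sum_congr rfl fun i _ => entry i

lemma key_trace (κ : Fin n → ℝ) (η : M) (p q r : ℕ) :
    ((Matrix.diagonal κ : M) ^ p * (η * ((Matrix.diagonal κ : M) ^ q * (η * (Matrix.diagonal κ : M) ^ r)))).trace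
      = ∑ i, ∑ j, κ i ^ (p + r) * κ j ^ q * (η i j * η j i) := by
  rw [Matrix.diagonal_pow, Matrix.diagonal_pow, Matrix.diagonal_pow, tr5]
  refine Finset.sum_congr rfl fun i _ => Finset.sum_congr rfl fun j _ => ?_
  simp only [Pi.pow_apply, pow_add]
  ring

lemma swap_sums {m : ℕ} (t : ℕ → ℕ) (g : ℕ → ℕ → Fin n → Fin n → ℝ) :
    (∑ l ∈ Finset.range m, ∑ b ∈ Finset.range (t l), ∑ i, ∑ j, g l b i j)
      = ∑ i, ∑ j, ∑ l ∈ Finset.range m, ∑ b ∈ Finset.range (t l), g l b i j := by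
  rw [Finset.sum_sigma', Finset.sum_comm]
  refine Finset.sum_congr rfl fun i _ => ?_
  rw [Finset.sum_comm]
  refine Finset.sum_congr rfl fun j _ => ?_
  rw [Finset.sum_sigma']

lemma D2_eval (k : ℕ) (hk : 2 ≤ k) (κ : Fin n → ℝ) (η : M) :
    ((∑ l ∈ Finset.range k,
        ((ContinuousLinearMap.compL ℝ M M ℝ ((TL n) ((Matrix.diagonal κ : M) ^ l))).comp
            (((mulL n).flip).comp (Dpow n (k - 1 - l) (Matrix.diagonal κ)))
          + ((ContinuousLinearMap.compL ℝ M M ℝ).flip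
              ((mulL n).flip ((Matrix.diagonal κ : M) ^ (k - 1 - l)))).comp
            ((TL n).comp (Dpow n l (Matrix.diagonal κ))))) : M →L[ℝ] M →L[ℝ] ℝ) η η
      = (k : ℝ) * ((k : ℝ) - 1) * ∑ i, κ i ^ (k - 2) * (η i i) ^ 2
        + (k : ℝ) * ∑ i, ∑ j, if i = j then 0 else
            (∑ l ∈ Finset.range (k - 1), κ i ^ l * κ j ^ (k - 2 - l)) * η i j * η j i := by
  simp only [ContinuousLinearMap.sum_apply, ContinuousLinearMap.add_apply,
    ContinuousLinearMap.coe_comp', Function.comp_apply, ContinuousLinearMap.flip_apply,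
    ContinuousLinearMap.compL_apply, TL_apply, mulL_apply, Dpow_apply, traceL_apply]
  have e1 : ∀ l ∈ Finset.range k,
      ((Matrix.diagonal κ : M) ^ l * (η * ∑ b ∈ Finset.range (k-1-l),
          (Matrix.diagonal κ : M) ^ b * (η * (Matrix.diagonal κ : M) ^ (k-1-l-1-b)))).trace
        = ∑ b ∈ Finset.range (k-1-l), ∑ i, ∑ j,
            κ i ^ (l + (k-1-l-1-b)) * κ j ^ b * (η i j * η j i) := by
    intro l _
    rw [Finset.mul_sum, Finset.mul_sum, Matrix.trace_sum]
    exact Finset.sum_congr rfl fun b _ => key_trace n κ η l b (k-1-l-1-b)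
  have e2 : ∀ l ∈ Finset.range k,
      ((∑ a ∈ Finset.range l, (Matrix.diagonal κ : M) ^ a * (η * (Matrix.diagonal κ : M) ^ (l-1-a)))
          * (η * (Matrix.diagonal κ : M) ^ (k-1-l))).trace
        = ∑ a ∈ Finset.range l, ∑ i, ∑ j,
            κ i ^ (a + (k-1-l)) * κ j ^ (l-1-a) * (η i j * η j i) := by
    intro l _
    rw [Finset.sum_mul, Matrix.trace_sum]
    refine Finset.sum_congr rfl fun a _ => ?_
    conv_lhs => rw [mul_assoc, mul_assoc]
    exact key_trace n κ η a (l-1-a) (k-1-l)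
  rw [Finset.sum_congr rfl (fun l hl => by rw [e1 l hl, e2 l hl]),
    Finset.sum_add_distrib,
    swap_sums n (fun l => k-1-l) (fun l b i j => κ i ^ (l + (k-1-l-1-b)) * κ j ^ b * (η i j * η j i)),
    swap_sums n (fun l => l) (fun l a i j => κ i ^ (a + (k-1-l)) * κ j ^ (l-1-a) * (η i j * η j i))]
  have hS1 : (∑ i, ∑ j, ∑ l ∈ Finset.range k, ∑ b ∈ Finset.range (k-1-l),
        κ i ^ (l + (k-1-l-1-b)) * κ j ^ b * (η i j * η j i))
      = ∑ i, ∑ j, (∑ b ∈ Finset.range (k-1), ((k-1-b : ℕ) : ℝ) * (κ i ^ (k-2-b) * κ j ^ b))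
          * (η i j * η j i) := by
    refine Finset.sum_congr rfl fun i _ => Finset.sum_congr rfl fun j _ => ?_
    rw [show (∑ l ∈ Finset.range k, ∑ b ∈ Finset.range (k-1-l),
        κ i ^ (l + (k-1-l-1-b)) * κ j ^ b * (η i j * η j i))
      = (∑ l ∈ Finset.range k, ∑ b ∈ Finset.range (k-1-l),
        κ i ^ (l + (k-1-l-1-b)) * κ j ^ b) * (η i j * η j i) by
        rw [Finset.sum_mul]
        exact Finset.sum_congr rfl fun l _ => by rw [Finset.sum_mul]]
    rw [sumB k (κ i) (κ j)]
  have hS2 : (∑ i, ∑ j, ∑ l ∈ Finset.range k, ∑ a ∈ Finset.range l,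
        κ i ^ (a + (k-1-l)) * κ j ^ (l-1-a) * (η i j * η j i))
      = ∑ i, ∑ j, (∑ b ∈ Finset.range (k-1), ((k-1-b : ℕ) : ℝ) * (κ i ^ (k-2-b) * κ j ^ b))
          * (η i j * η j i) := by
    refine Finset.sum_congr rfl fun i _ => Finset.sum_congr rfl fun j _ => ?_
    rw [show (∑ l ∈ Finset.range k, ∑ a ∈ Finset.range l,
        κ i ^ (a + (k-1-l)) * κ j ^ (l-1-a) * (η i j * η j i))
      = (∑ l ∈ Finset.range k, ∑ a ∈ Finset.range l,
        κ i ^ (a + (k-1-l)) * κ j ^ (l-1-a)) * (η i j * η j i) by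
        rw [Finset.sum_mul]
        exact Finset.sum_congr rfl fun l _ => by rw [Finset.sum_mul]]
    rw [sumA k (κ i) (κ j)]
  have hswap : (∑ i, ∑ j, (∑ b ∈ Finset.range (k-1), ((k-1-b : ℕ) : ℝ)
          * (κ i ^ (k-2-b) * κ j ^ b)) * (η i j * η j i))
      = ∑ i, ∑ j, (∑ b ∈ Finset.range (k-1), ((k-1-b : ℕ) : ℝ)
          * (κ j ^ (k-2-b) * κ i ^ b)) * (η i j * η j i) :=
    (Finset.sum_comm).trans
      (Finset.sum_congr rfl fun i _ => Finset.sum_congr rfl fun j _ => by ring)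
  rw [hS1, hS2]
  nth_rewrite 2 [hswap]
  rw [← Finset.sum_add_distrib,
    Finset.sum_congr rfl (fun (i : Fin n) _ => (Finset.sum_add_distrib).symm)]
  have hpt : ∀ i j : Fin n,
      ((∑ b ∈ Finset.range (k-1), ((k-1-b : ℕ) : ℝ) * (κ i ^ (k-2-b) * κ j ^ b)) * (η i j * η j i)
        + (∑ b ∈ Finset.range (k-1), ((k-1-b : ℕ) : ℝ) * (κ j ^ (k-2-b) * κ i ^ b)) * (η i j * η j i))
      = (if i = j then (k : ℝ) * ((k : ℝ) - 1) * (κ i ^ (k-2) * (η i i) ^ 2) else 0)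
        + (k : ℝ) * (if i = j then 0 else
            (∑ l ∈ Finset.range (k-1), κ i ^ l * κ j ^ (k-2-l)) * η i j * η j i) := by
    intro i j
    rw [← add_mul, sumE k hk (κ i) (κ j)]
    by_cases h : i = j
    · subst h
      rw [if_pos rfl, if_pos rfl]
      have hC : ∀ l ∈ Finset.range (k-1), κ i ^ l * κ i ^ (k-2-l) = κ i ^ (k-2) := by
        intro l hl
        rw [Finset.mem_range] at hl
        rw [← pow_add]
        congr 1
        omega
      rw [Finset.sum_congr rfl hC, Finset.sum_const, Finset.card_range, nsmul_eq_mul]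
      have : ((k-1 : ℕ) : ℝ) = (k : ℝ) - 1 := by
        rw [Nat.cast_sub (by omega)]; norm_num
      rw [this]
      ring
    · simp only [if_neg h, zero_add]
      ring
  rw [Finset.sum_congr rfl (fun (i : Fin n) _ =>
      Finset.sum_congr rfl (fun (j : Fin n) _ => hpt i j)),
    Finset.sum_congr rfl (fun (i : Fin n) _ => Finset.sum_add_distrib),
    Finset.sum_add_distrib]
  congr 1
  · rw [Finset.mul_sum]
    refine Finset.sum_congr rfl fun i _ => ?_
    simp only [Finset.sum_ite_eq, Finset.mem_univ, if_true]
  · rw [Finset.mul_sum]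
    refine Finset.sum_congr rfl fun i _ => ?_
    rw [Finset.mul_sum]

lemma hasFDerivAt_psum (k : ℕ) (κ : Fin n → ℝ) :
    HasFDerivAt (fun x : Fin n → ℝ => ∑ a, x a ^ k)
      (∑ a, ((k : ℝ) * κ a ^ (k-1)) • (ContinuousLinearMap.proj a : (Fin n → ℝ) →L[ℝ] ℝ)) κ := by
  have h : ∀ a ∈ Finset.univ (α := Fin n),
      HasFDerivAt (fun x : Fin n → ℝ => x a ^ k)
        (((k : ℝ) * κ a ^ (k-1)) • (ContinuousLinearMap.proj a : (Fin n → ℝ) →L[ℝ] ℝ)) κ := by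
    intro a _
    have hproj : HasFDerivAt (fun x : Fin n → ℝ => x a)
        (ContinuousLinearMap.proj a : (Fin n → ℝ) →L[ℝ] ℝ) κ :=
      (ContinuousLinearMap.proj a : (Fin n → ℝ) →L[ℝ] ℝ).hasFDerivAt
    exact (hasDerivAt_pow k (κ a)).comp_hasFDerivAt κ hproj
  exact HasFDerivAt.fun_sum h

lemma fderiv_psum (k : ℕ) (κ : Fin n → ℝ) (i : Fin n) :
    fderiv ℝ (fun x : Fin n → ℝ => ∑ a, x a ^ k) κ (Pi.single i 1) = (k : ℝ) * κ i ^ (k-1) := by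
  rw [(hasFDerivAt_psum n k κ).fderiv]
  simp only [ContinuousLinearMap.coe_sum', Finset.sum_apply, ContinuousLinearMap.smul_apply,
    ContinuousLinearMap.proj_apply, Pi.single_apply, smul_eq_mul, mul_ite, mul_one, mul_zero,
    Finset.sum_ite_eq', Finset.mem_univ, if_true]

end

/-- For `k ≥ 2` and `A = diagonal κ`, the second Fréchet derivative of
`P_k(A) = trace (A ^ k)` satisfies
`d²P_k(A)(η,η) = k(k-1) ∑ᵢ κᵢ^{k-2} ηᵢᵢ² + k ∑_{i≠j} (∑_{l=1}^{k-1} κᵢ^{l-1} κⱼ^{k-1-l}) ηᵢⱼ ηⱼᵢ`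
(inner sums reindexed over `l ∈ {0, …, k-2}`); moreover for `κᵢ ≠ κⱼ` the off-diagonal
coefficient equals `(∂p_k/∂κᵢ(κ) - ∂p_k/∂κⱼ(κ))/(κᵢ - κⱼ) = k (κᵢ^{k-1} - κⱼ^{k-1})/(κᵢ - κⱼ)`. -/
theorem stmt_6 (n k : ℕ) (hk : 2 ≤ k) (κ : Fin n → ℝ) :
    (∀ η : Matrix (Fin n) (Fin n) ℝ,
      fderiv ℝ (fderiv ℝ (fun X : Matrix (Fin n) (Fin n) ℝ => (X ^ k).trace))
          (Matrix.diagonal κ) η η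
        = (k : ℝ) * ((k : ℝ) - 1) * ∑ i, κ i ^ (k - 2) * (η i i) ^ 2
          + (k : ℝ) * ∑ i, ∑ j,
              if i = j then 0 else
                (∑ l ∈ Finset.range (k - 1), κ i ^ l * κ j ^ (k - 2 - l)) * η i j * η j i) ∧
    ∀ i j : Fin n, κ i ≠ κ j →
      (k : ℝ) * ∑ l ∈ Finset.range (k - 1), κ i ^ l * κ j ^ (k - 2 - l)
          = (fderiv ℝ (fun x : Fin n → ℝ => ∑ a, x a ^ k) κ (Pi.single i 1)
              - fderiv ℝ (fun x : Fin n → ℝ => ∑ a, x a ^ k) κ (Pi.single j 1))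
            / (κ i - κ j) ∧
      (k : ℝ) * ∑ l ∈ Finset.range (k - 1), κ i ^ l * κ j ^ (k - 2 - l)
          = (k : ℝ) * (κ i ^ (k - 1) - κ j ^ (k - 1)) / (κ i - κ j) := by
  constructor
  · intro η
    have hF : fderiv ℝ (fun X : Matrix (Fin n) (Fin n) ℝ => (X ^ k).trace)
        = fun X => (traceL n).comp (Dpow n k X) := by
      funext X
      exact ((traceL n).hasFDerivAt.comp X (hasFDerivAt_pow_M n k X)).fderiv
    rw [hF]
    exact (congrArg (fun L => L η η) (hasFDerivAt_G n k (Matrix.diagonal κ)).fderiv).trans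
      (D2_eval n k hk κ η)
  · intro i j hij
    have hsub : κ i - κ j ≠ 0 := sub_ne_zero.2 hij
    have hgeom : (k : ℝ) * ∑ l ∈ Finset.range (k - 1), κ i ^ l * κ j ^ (k - 2 - l)
        = (k : ℝ) * (κ i ^ (k - 1) - κ j ^ (k - 1)) / (κ i - κ j) := by
      have hg := geom_sum₂_mul (κ i) (κ j) (k-1)
      have hC : (∑ l ∈ Finset.range (k-1), κ i ^ l * κ j ^ (k-2-l))
          = ∑ l ∈ Finset.range (k-1), κ i ^ l * κ j ^ (k-1-1-l) := by
        refine Finset.sum_congr rfl fun l hl => ?_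
        rfl
      rw [hC, eq_div_iff hsub, mul_assoc, hg]
    refine ⟨?_, hgeom⟩
    rw [fderiv_psum n k κ i, fderiv_psum n k κ j, hgeom, mul_sub]
end

section
/- Let Γ ⊆ ℝⁿ be open and convex, f : Γ → ℝ be C², and let i ≠ j be such that f is invariant under swapping the i-th and j-th coordinates. Let κ ∈ Γ with κᵢ ≠ κⱼ, and suppose the segment σ(t) = κ + t·((κⱼ − κᵢ)/2)·(eᵢ − eⱼ), t ∈ [0,1], lies in Γ (which holds automatically when Γ is invariant under this coordinate swap). Then (∂f/∂κᵢ(κ) − ∂f/∂κⱼ(κ))/(κᵢ − κⱼ) = (1/2) ∫₀¹ (∂²f/∂κᵢ² − 2 ∂²f/∂κᵢ∂κⱼ + ∂²f/∂κⱼ²)(σ(t)) dt. -/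
/-- Let `Γ ⊆ ℝⁿ` be open and convex, `f` of class `C²` on `Γ`, and
`i ≠ j` such that `f` is invariant on `Γ` under swapping the `i`-th and `j`-th
coordinates. If `κ ∈ Γ`, `κ i ≠ κ j` and the segment
`σ(t) = κ + t ((κⱼ - κᵢ)/2)(eᵢ - eⱼ)`, `t ∈ [0,1]`, lies in `Γ`, then
`(∂f/∂κᵢ(κ) - ∂f/∂κⱼ(κ))/(κᵢ - κⱼ)
   = (1/2) ∫₀¹ (∂²f/∂κᵢ² - 2 ∂²f/∂κᵢ∂κⱼ + ∂²f/∂κⱼ²)(σ(t)) dt`. -/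
theorem stmt_8 (n : ℕ) (Γ : Set (Fin n → ℝ)) (hΓopen : IsOpen Γ) (hΓconv : Convex ℝ Γ)
    (f : (Fin n → ℝ) → ℝ) (hf : ContDiffOn ℝ 2 f Γ)
    (i j : Fin n) (hij : i ≠ j)
    (hsym : ∀ x ∈ Γ, f (x ∘ Equiv.swap i j) = f x)
    (κ : Fin n → ℝ) (hκ : κ ∈ Γ) (hne : κ i ≠ κ j)
    (hseg : ∀ t ∈ Set.Icc (0 : ℝ) 1,
      κ + (t * ((κ j - κ i) / 2)) • (Pi.single i 1 - Pi.single j 1) ∈ Γ) :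
    (fderiv ℝ f κ (Pi.single i 1) - fderiv ℝ f κ (Pi.single j 1)) / (κ i - κ j)
      = (1 / 2) * ∫ t in (0 : ℝ)..1,
          (fderiv ℝ (fderiv ℝ f)
              (κ + (t * ((κ j - κ i) / 2)) • (Pi.single i 1 - Pi.single j 1))
              (Pi.single i 1) (Pi.single i 1)
            - 2 * fderiv ℝ (fderiv ℝ f)
              (κ + (t * ((κ j - κ i) / 2)) • (Pi.single i 1 - Pi.single j 1))
              (Pi.single i 1) (Pi.single j 1)
            + fderiv ℝ (fderiv ℝ f)
              (κ + (t * ((κ j - κ i) / 2)) • (Pi.single i 1 - Pi.single j 1))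
              (Pi.single j 1) (Pi.single j 1)) := by
  classical
  set v : Fin n → ℝ := Pi.single i 1 - Pi.single j 1 with hv
  set c : ℝ := (κ j - κ i) / 2 with hc
  set φ : ℝ → (Fin n → ℝ) := fun t => κ + (t * c) • v with hφ
  set H := fderiv ℝ (fderiv ℝ f) with hH
  have hφ0 : φ 0 = κ := by simp [hφ]
  have hmem : ∀ t ∈ Set.Icc (0:ℝ) 1, φ t ∈ Γ := hseg
  have hdf : ∀ x ∈ Γ, DifferentiableAt ℝ f x := fun x hx =>
    (hf.differentiableOn (by norm_num)).differentiableAt (hΓopen.mem_nhds hx)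
  have h1 : ContDiffOn ℝ 1 (fderiv ℝ f) Γ := hf.fderiv_of_isOpen hΓopen (by norm_num)
  have hdf2 : ∀ x ∈ Γ, DifferentiableAt ℝ (fderiv ℝ f) x := fun x hx =>
    (h1.differentiableOn (by norm_num)).differentiableAt (hΓopen.mem_nhds hx)
  have hcont2 : ContinuousOn H Γ :=
    (ContDiffOn.fderiv_of_isOpen (m := 0) h1 hΓopen (by norm_num)).continuousOn
  have hφd : ∀ t : ℝ, HasDerivAt φ (c • v) t := by
    intro t
    have h2 : HasDerivAt (fun t : ℝ => t * c) c t := by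
      simpa using (hasDerivAt_id t).mul_const c
    exact (h2.smul_const v).const_add κ
  -- derivative of g t = fderiv f (φ t) v
  have hg : ∀ t ∈ Set.Icc (0:ℝ) 1,
      HasDerivAt (fun t => fderiv ℝ f (φ t) v) (c * (H (φ t) v v)) t := by
    intro t ht
    have hx := hmem t ht
    have hF : HasFDerivAt (fderiv ℝ f) (H (φ t)) (φ t) := (hdf2 _ hx).hasFDerivAt
    have h3 := hF.comp_hasDerivAt t (hφd t)
    have h4 := h3.clm_apply (hasDerivAt_const t v)
    simpa [map_smul, ContinuousLinearMap.smul_apply, smul_eq_mul] using h4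
  have hgcont : ContinuousOn (fun t => c * (H (φ t) v v)) (Set.Icc (0:ℝ) 1) := by
    have hφc : ContinuousOn φ (Set.Icc (0:ℝ) 1) :=
      (Continuous.continuousOn (by fun_prop))
    have h3 : ContinuousOn (fun t => H (φ t)) (Set.Icc (0:ℝ) 1) := hcont2.comp hφc hmem
    exact continuousOn_const.mul
      ((h3.clm_apply continuousOn_const).clm_apply continuousOn_const)
  have hint : IntervalIntegrable (fun t => c * (H (φ t) v v)) MeasureTheory.volume 0 1 := by
    apply ContinuousOn.intervalIntegrable
    rwa [Set.uIcc_of_le zero_le_one]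
  have hFTC : (∫ t in (0:ℝ)..1, c * (H (φ t) v v))
      = fderiv ℝ f (φ 1) v - fderiv ℝ f (φ 0) v :=
    intervalIntegral.integral_eq_sub_of_hasDerivAt
      (fun t ht => hg t (by rwa [Set.uIcc_of_le zero_le_one] at ht)) hint
  -- symmetry: fderiv f (φ 1) v = 0
  have hp : φ 1 ∈ Γ := hmem 1 (by norm_num)
  have hφ1i : φ 1 i = κ i + c := by
    simp only [hφ, hv, Pi.add_apply, Pi.smul_apply, Pi.sub_apply, smul_eq_mul, one_mul,
      Pi.single_eq_same, Pi.single_eq_of_ne hij]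
    ring
  have hφ1j : φ 1 j = κ j - c := by
    simp only [hφ, hv, Pi.add_apply, Pi.smul_apply, Pi.sub_apply, smul_eq_mul, one_mul,
      Pi.single_eq_same, Pi.single_eq_of_ne hij.symm]
    ring
  have hij' : φ 1 i = φ 1 j := by rw [hφ1i, hφ1j, hc]; ring
  have hfix : φ 1 ∘ Equiv.swap i j = φ 1 := by
    funext k
    rcases eq_or_ne k i with rfl | hki
    · rw [Function.comp_apply, Equiv.swap_apply_left]; exact hij'.symm
    rcases eq_or_ne k j with rfl | hkj
    · rw [Function.comp_apply, Equiv.swap_apply_right]; exact hij'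
    · rw [Function.comp_apply, Equiv.swap_apply_of_ne_of_ne hki hkj]
  set S : (Fin n → ℝ) →L[ℝ] (Fin n → ℝ) :=
    LinearMap.toContinuousLinearMap (LinearMap.funLeft ℝ ℝ (Equiv.swap i j)) with hS
  have hSapp : ∀ x : Fin n → ℝ, S x = x ∘ Equiv.swap i j := fun x => rfl
  have hdp : HasFDerivAt f (fderiv ℝ f (φ 1)) (φ 1) := (hdf _ hp).hasFDerivAt
  have hcomp : HasFDerivAt (f ∘ S) ((fderiv ℝ f (φ 1)).comp S) (φ 1) := by
    have h5 : HasFDerivAt f (fderiv ℝ f (φ 1)) (S (φ 1)) := by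
      rw [hSapp, hfix]; exact hdp
    exact h5.comp (φ 1) S.hasFDerivAt
  have heq : (f ∘ S) =ᶠ[nhds (φ 1)] f := by
    filter_upwards [hΓopen.mem_nhds hp] with x hx
    exact hsym x hx
  have huniq : (fderiv ℝ f (φ 1)).comp S = fderiv ℝ f (φ 1) :=
    (hcomp.congr_of_eventuallyEq heq.symm).unique hdp
  have hSei : S (Pi.single i 1) = Pi.single j 1 := by
    rw [hSapp]
    funext k
    rcases eq_or_ne k j with rfl | hkj
    · rw [Function.comp_apply, Equiv.swap_apply_right]; simp
    rcases eq_or_ne k i with rfl | hki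
    · rw [Function.comp_apply, Equiv.swap_apply_left,
        Pi.single_eq_of_ne hij, Pi.single_eq_of_ne hij.symm]
    · rw [Function.comp_apply, Equiv.swap_apply_of_ne_of_ne hki hkj,
        Pi.single_eq_of_ne hki, Pi.single_eq_of_ne hkj]
  have hg1 : fderiv ℝ f (φ 1) v = 0 := by
    have h6 := congrArg (fun L : (Fin n → ℝ) →L[ℝ] ℝ => L (Pi.single i 1)) huniq
    simp only [ContinuousLinearMap.comp_apply, hSei] at h6
    simp [hv, map_sub, h6]
  -- symmetry of second derivative
  have hsymH : ∀ t ∈ Set.Icc (0:ℝ) 1,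
      H (φ t) (Pi.single i 1) (Pi.single j 1) = H (φ t) (Pi.single j 1) (Pi.single i 1) := by
    intro t ht
    have hx := hmem t ht
    exact second_derivative_symmetric_of_eventually
      (Filter.eventually_of_mem (hΓopen.mem_nhds hx) fun y hy => (hdf y hy).hasFDerivAt)
      ((hdf2 _ hx).hasFDerivAt) _ _
  have hIeq : (∫ t in (0:ℝ)..1,
          (H (φ t) (Pi.single i 1) (Pi.single i 1)
            - 2 * H (φ t) (Pi.single i 1) (Pi.single j 1)
            + H (φ t) (Pi.single j 1) (Pi.single j 1)))
      = ∫ t in (0:ℝ)..1, H (φ t) v v := by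
    apply intervalIntegral.integral_congr
    intro t ht
    rw [Set.uIcc_of_le zero_le_one] at ht
    have hs := hsymH t ht
    simp only [hv, map_sub, ContinuousLinearMap.sub_apply]
    rw [hs]; ring
  have hconst : (∫ t in (0:ℝ)..1, c * (H (φ t) v v))
      = c * ∫ t in (0:ℝ)..1, H (φ t) v v :=
    intervalIntegral.integral_const_mul c _
  rw [hconst, hg1, hφ0] at hFTC
  have hvapp : fderiv ℝ f κ v = fderiv ℝ f κ (Pi.single i 1) - fderiv ℝ f κ (Pi.single j 1) := by
    simp [hv, map_sub]
  show (fderiv ℝ f κ (Pi.single i 1) - fderiv ℝ f κ (Pi.single j 1)) / (κ i - κ j)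
      = (1 / 2) * ∫ t in (0:ℝ)..1,
          (H (φ t) (Pi.single i 1) (Pi.single i 1)
            - 2 * H (φ t) (Pi.single i 1) (Pi.single j 1)
            + H (φ t) (Pi.single j 1) (Pi.single j 1))
  calc (fderiv ℝ f κ (Pi.single i 1) - fderiv ℝ f κ (Pi.single j 1)) / (κ i - κ j)
      = (fderiv ℝ f κ v) / (κ i - κ j) := by rw [hvapp]
    _ = (1/2) * ∫ t in (0:ℝ)..1, H (φ t) v v := by
        have hsub : κ i - κ j ≠ 0 := sub_ne_zero.mpr hne
        have : fderiv ℝ f κ v = -(c * ∫ t in (0:ℝ)..1, H (φ t) v v) := by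
          linarith [hFTC]
        rw [this, hc]; field_simp; ring
    _ = (1/2) * ∫ t in (0:ℝ)..1,
          (H (φ t) (Pi.single i 1) (Pi.single i 1)
            - 2 * H (φ t) (Pi.single i 1) (Pi.single j 1)
            + H (φ t) (Pi.single j 1) (Pi.single j 1)) := by rw [hIeq]
end

section
/- Let U ⊆ ℝ^m be open, ψ : U → ℝ be C², and F(A) = ψ(P₁(A), …, P_m(A)) on Ω = {A : (P₁(A),…,P_m(A)) ∈ U}. Then for every A ∈ Ω and all n×n real matrices W and η, d²F(A)(WA − AW, η) = dF(A)(ηW − Wη). -/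
attribute [local instance] Matrix.normedAddCommGroup Matrix.normedSpace

namespace Stmt10Aux

variable {n : ℕ}

noncomputable def mulCLM (n : ℕ) :
    Matrix (Fin n) (Fin n) ℝ →L[ℝ] Matrix (Fin n) (Fin n) ℝ →L[ℝ] Matrix (Fin n) (Fin n) ℝ :=
  LinearMap.toContinuousLinearMap
  { toFun := fun A => LinearMap.toContinuousLinearMap (LinearMap.mul ℝ _ A)
    map_add' := fun A B => by ext X; simp [add_mul]
    map_smul' := fun c A => by ext X; simp [smul_mul_assoc] }

@[simp] lemma mulCLM_apply (A B : Matrix (Fin n) (Fin n) ℝ) : mulCLM n A B = A * B := rfl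

lemma isBBM_mul :
    IsBoundedBilinearMap ℝ (fun p : Matrix (Fin n) (Fin n) ℝ × Matrix (Fin n) (Fin n) ℝ =>
      p.1 * p.2) := by
  exact (mulCLM n).isBoundedBilinearMap

lemma HasDerivAt.matMul {u v : ℝ → Matrix (Fin n) (Fin n) ℝ} {u' v' : Matrix (Fin n) (Fin n) ℝ}
    {t : ℝ} (hu : HasDerivAt u u' t) (hv : HasDerivAt v v' t) :
    HasDerivAt (fun s => u s * v s) (u' * v t + u t * v') t := by
  have h := (isBBM_mul (n := n)).hasFDerivAt (u t, v t)
  have := h.comp_hasDerivAt t (hu.prodMk hv)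
  exact this.congr_deriv (by simp [IsBoundedBilinearMap.deriv_apply, add_comm])

lemma contDiff_mpow {N : WithTop ℕ∞} (k : ℕ) :
    ContDiff ℝ N (fun X : Matrix (Fin n) (Fin n) ℝ => X ^ k) := by
  induction k with
  | zero => simpa using contDiff_const
  | succ k ih =>
    have h : (fun X : Matrix (Fin n) (Fin n) ℝ => X ^ (k + 1))
        = (fun p : Matrix (Fin n) (Fin n) ℝ × Matrix (Fin n) (Fin n) ℝ => p.1 * p.2)
          ∘ fun X => (X ^ k, X) := by
      funext X; simp [pow_succ]
    rw [h]
    exact (isBBM_mul).contDiff.comp (ih.prodMk contDiff_id)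

noncomputable def traceCLM (n : ℕ) : Matrix (Fin n) (Fin n) ℝ →L[ℝ] ℝ :=
  LinearMap.toContinuousLinearMap (Matrix.traceLinearMap (Fin n) ℝ ℝ)

@[simp] lemma traceCLM_apply (X : Matrix (Fin n) (Fin n) ℝ) : traceCLM n X = X.trace := rfl

lemma contDiff_Pvec {N : WithTop ℕ∞} (m : ℕ) : ContDiff ℝ N (Pvec n m) := by
  have h : Pvec n m = fun X (l : Fin m) => traceCLM n (X ^ ((l : ℕ) + 1)) := rfl
  rw [h]
  exact contDiff_pi.2 fun l => (traceCLM n).contDiff.comp (contDiff_mpow _)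

lemma differentiableAt_det_comp {B : ℝ → Matrix (Fin n) (Fin n) ℝ} {t₀ : ℝ}
    (hB : ∀ i j, DifferentiableAt ℝ (fun t => B t i j) t₀) :
    DifferentiableAt ℝ (fun t => (B t).det) t₀ := by
  have h : (fun t => (B t).det)
      = fun t => ∑ σ : Equiv.Perm (Fin n),
          ((Equiv.Perm.sign σ : ℤ) : ℝ) * ∏ i, B t (σ i) i := by
    funext t
    rw [Matrix.det_apply]
    congr 1
    funext σ
    rw [Units.smul_def, zsmul_eq_mul]
  rw [h]
  exact DifferentiableAt.fun_sum fun σ _ =>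
    (DifferentiableAt.fun_finsetProd fun i _ => hB (σ i) i).const_mul _

lemma differentiableAt_inv_comp {g : ℝ → Matrix (Fin n) (Fin n) ℝ} {t₀ : ℝ}
    (hg : ∀ i j, DifferentiableAt ℝ (fun t => g t i j) t₀) (hdet : (g t₀).det ≠ 0) :
    DifferentiableAt ℝ (fun t => (g t)⁻¹) t₀ := by
  have h : (fun t => (g t)⁻¹) = fun t => ((g t).det)⁻¹ • (g t).adjugate := by
    funext t
    rw [Matrix.inv_def, Ring.inverse_eq_inv']
  rw [h]
  apply DifferentiableAt.smul ((differentiableAt_det_comp hg).inv hdet)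
  have hadj : ∀ i j : Fin n,
      DifferentiableAt ℝ (fun t => (g t).adjugate i j) t₀ := by
    intro i j
    have h2 : (fun t => (g t).adjugate i j)
        = fun t => ((g t).updateRow j (Pi.single i 1)).det := by
      funext t; rw [Matrix.adjugate_apply]
    rw [h2]
    apply differentiableAt_det_comp
    intro k l
    rcases eq_or_ne k j with rfl | hkj
    · simp only [Matrix.updateRow_apply, if_pos rfl]
      exact differentiableAt_const _
    · simp only [Matrix.updateRow_apply, if_neg hkj]
      exact hg k l
  exact differentiableAt_pi.2 fun i => differentiableAt_pi.2 fun j => hadj i j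

lemma Pvec_conj (m : ℕ) {g : Matrix (Fin n) (Fin n) ℝ} (hg : IsUnit g)
    (X : Matrix (Fin n) (Fin n) ℝ) : Pvec n m (g * X * g⁻¹) = Pvec n m X := by
  funext l
  obtain ⟨u, rfl⟩ := hg
  show (((u : Matrix (Fin n) (Fin n) ℝ) * X * (u : Matrix (Fin n) (Fin n) ℝ)⁻¹)
      ^ ((l : ℕ) + 1)).trace = (X ^ ((l : ℕ) + 1)).trace
  rw [← Matrix.coe_units_inv, Units.conj_pow, Matrix.coe_units_inv,
    Matrix.trace_conj (Units.isUnit u)]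

end Stmt10Aux

/-- For `ψ` of class `C²` on the open `U ⊆ ℝ^m` and the associated
operator function `F(A) = ψ(P₁(A),…,P_m(A))` on `Ω = {A | Pvec A ∈ U}`, for every
`A ∈ Ω` and all matrices `W`, `η`:
`d²F(A)(WA - AW, η) = dF(A)(ηW - Wη)`. -/
theorem stmt_10 (n m : ℕ) (U : Set (Fin m → ℝ)) (hU : IsOpen U)
    (ψ : (Fin m → ℝ) → ℝ) (hψ : ContDiffOn ℝ 2 ψ U)
    (A : Matrix (Fin n) (Fin n) ℝ) (hA : Pvec n m A ∈ U) :
    ∀ W η : Matrix (Fin n) (Fin n) ℝ,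
      fderiv ℝ (fderiv ℝ (fun X : Matrix (Fin n) (Fin n) ℝ => ψ (Pvec n m X))) A
          (W * A - A * W) η
        = fderiv ℝ (fun X : Matrix (Fin n) (Fin n) ℝ => ψ (Pvec n m X)) A
            (η * W - W * η) := by
  intro W η
  classical
  letI : NormedAddCommGroup (Matrix (Fin n) (Fin n) ℝ →L[ℝ] ℝ) :=
    ContinuousLinearMap.toNormedAddCommGroup
  letI : NormedSpace ℝ (Matrix (Fin n) (Fin n) ℝ →L[ℝ] ℝ) :=
    ContinuousLinearMap.toNormedSpace
  set F : Matrix (Fin n) (Fin n) ℝ → ℝ := fun X => ψ (Pvec n m X) with hFdef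
  set Ω : Set (Matrix (Fin n) (Fin n) ℝ) := Pvec n m ⁻¹' U with hΩdef
  have hΩo : IsOpen Ω := hU.preimage (Stmt10Aux.contDiff_Pvec (N := 2) m).continuous
  have hFC : ContDiffOn ℝ 2 F Ω :=
    hψ.comp (Stmt10Aux.contDiff_Pvec m).contDiffOn (fun x hx => hx)
  have hGC : ContDiffOn ℝ 1 (fderiv ℝ F) Ω := hFC.fderiv_of_isOpen hΩo (by norm_num)
  have hAΩ : A ∈ Ω := hA
  have hGd : DifferentiableAt ℝ (fderiv ℝ F) A :=
    (hGC.differentiableOn one_ne_zero).differentiableAt (hΩo.mem_nhds hAΩ)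
  -- the curves
  set g : ℝ → Matrix (Fin n) (Fin n) ℝ := fun t => 1 + t • W with hgdef
  have hgE : ∀ i j, DifferentiableAt ℝ (fun t => g t i j) 0 := by
    intro i j
    have h : (fun t => g t i j) = fun t => (1 : Matrix (Fin n) (Fin n) ℝ) i j + t * W i j := by
      funext t; simp [hgdef, Matrix.add_apply, Matrix.smul_apply, smul_eq_mul]
    rw [h]
    exact (differentiableAt_const _).add (differentiableAt_id.mul (differentiableAt_const _))
  have hg0 : g 0 = 1 := by simp [hgdef]
  have hdet0 : (g 0).det ≠ 0 := by rw [hg0]; simp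
  set i : ℝ → Matrix (Fin n) (Fin n) ℝ := fun t => (g t)⁻¹ with hidef
  have hi0 : i 0 = 1 := by rw [hidef]; simp only [hg0]; simp
  have hidiff : DifferentiableAt ℝ i 0 := Stmt10Aux.differentiableAt_inv_comp hgE hdet0
  have hgD : HasDerivAt g W 0 := by
    have h1 : HasDerivAt (fun t : ℝ => t • W) ((1 : ℝ) • W) 0 := (hasDerivAt_id 0).smul_const W
    have h2 := h1.const_add (1 : Matrix (Fin n) (Fin n) ℝ)
    rw [one_smul] at h2
    exact h2
  have hdetc : ContinuousAt (fun t => (g t).det) 0 :=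
    (Stmt10Aux.differentiableAt_det_comp hgE).continuousAt
  have hev : ∀ᶠ t in nhds (0 : ℝ), IsUnit (g t).det := by
    filter_upwards [hdetc.eventually_ne hdet0] with t ht using isUnit_iff_ne_zero.2 ht
  have hmul1 : ∀ᶠ t in nhds (0 : ℝ), g t * i t = 1 := by
    filter_upwards [hev] with t ht using Matrix.mul_nonsing_inv _ ht
  obtain ⟨D, hiD⟩ : ∃ D, HasDerivAt i D 0 := ⟨_, hidiff.hasDerivAt⟩
  have hprod : HasDerivAt (fun t => g t * i t) (W * i 0 + g 0 * D) 0 :=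
    Stmt10Aux.HasDerivAt.matMul hgD hiD
  have hconst1 : HasDerivAt (fun t => g t * i t) 0 0 :=
    (hasDerivAt_const (0 : ℝ) (1 : Matrix (Fin n) (Fin n) ℝ)).congr_of_eventuallyEq hmul1
  have hD : D = -W := by
    have h := hprod.unique hconst1
    rw [hi0, hg0, mul_one, one_mul] at h
    exact eq_neg_of_add_eq_zero_right h
  rw [hD] at hiD
  -- derivative of γ and δ
  have hAc : HasDerivAt (fun _ : ℝ => A) 0 0 := hasDerivAt_const _ _
  have hηc : HasDerivAt (fun _ : ℝ => η) 0 0 := hasDerivAt_const _ _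
  have hγ : HasDerivAt (fun t => g t * A * i t) (W * A - A * W) 0 := by
    have h2 := Stmt10Aux.HasDerivAt.matMul (Stmt10Aux.HasDerivAt.matMul hgD hAc) hiD
    rw [hg0, hi0] at h2
    convert h2 using 1
    noncomm_ring
  have hδ : HasDerivAt (fun t => g t * η * i t) (W * η - η * W) 0 := by
    have h2 := Stmt10Aux.HasDerivAt.matMul (Stmt10Aux.HasDerivAt.matMul hgD hηc) hiD
    rw [hg0, hi0] at h2
    convert h2 using 1
    noncomm_ring
  have hγ0 : g 0 * A * i 0 = A := by rw [hg0, hi0, one_mul, mul_one]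
  have hδ0 : g 0 * η * i 0 = η := by rw [hg0, hi0, one_mul, mul_one]
  -- derivative of t ↦ G (γ t)
  have hGd' : HasFDerivAt (fderiv ℝ F) (fderiv ℝ (fderiv ℝ F) A) (g 0 * A * i 0) := by
    rw [hγ0]; exact hGd.hasFDerivAt
  have hGγ : HasDerivAt (fun t => fderiv ℝ F (g t * A * i t))
      (fderiv ℝ (fderiv ℝ F) A (W * A - A * W)) 0 :=
    hGd'.comp_hasDerivAt 0 hγ
  have hpair : HasDerivAt
      (fun t => (fderiv ℝ F (g t * A * i t), g t * η * i t))
      (fderiv ℝ (fderiv ℝ F) A (W * A - A * W), W * η - η * W) 0 := hGγ.prodMk hδ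
  have happ : HasFDerivAt
      (fun p : (Matrix (Fin n) (Fin n) ℝ →L[ℝ] ℝ) × Matrix (Fin n) (Fin n) ℝ => p.1 p.2)
      (isBoundedBilinearMap_apply.deriv (fderiv ℝ F A, η))
      (fderiv ℝ F (g 0 * A * i 0), g 0 * η * i 0) := by
    rw [hγ0, hδ0]
    exact isBoundedBilinearMap_apply.hasFDerivAt _
  have hh : HasDerivAt (fun t => fderiv ℝ F (g t * A * i t) (g t * η * i t))
      (isBoundedBilinearMap_apply.deriv (fderiv ℝ F A, η)
        (fderiv ℝ (fderiv ℝ F) A (W * A - A * W), W * η - η * W)) 0 :=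
    by have := happ.comp_hasDerivAt 0 hpair; exact this
  -- the function is eventually constant
  have hconst2 : ∀ᶠ t in nhds (0 : ℝ),
      fderiv ℝ F (g t * A * i t) (g t * η * i t) = fderiv ℝ F A η := by
    filter_upwards [hev] with t ht
    have hgu : IsUnit (g t) := (Matrix.isUnit_iff_isUnit_det _).2 ht
    set L : Matrix (Fin n) (Fin n) ℝ →L[ℝ] Matrix (Fin n) (Fin n) ℝ :=
      ((Stmt10Aux.mulCLM n).flip (i t)).comp (Stmt10Aux.mulCLM n (g t)) with hLdef
    have hLapp : ∀ X, L X = g t * X * i t := fun X => rfl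
    have hPL : ∀ X, Pvec n m (L X) = Pvec n m X := by
      intro X
      rw [hLapp]
      exact Stmt10Aux.Pvec_conj m hgu X
    have hFL : F = F ∘ L := by
      funext X
      show ψ (Pvec n m X) = ψ (Pvec n m (L X))
      rw [hPL]
    have hLA : L A ∈ Ω := by
      show Pvec n m (L A) ∈ U
      rw [hPL]; exact hA
    have hdFLA : DifferentiableAt ℝ F (L A) :=
      (hFC.differentiableOn (by norm_num)).differentiableAt (hΩo.mem_nhds hLA)
    have hcomp : fderiv ℝ F A = (fderiv ℝ F (L A)).comp (L : _ →L[ℝ] _) := by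
      conv_lhs => rw [hFL]
      exact (fderiv_comp (x := A) hdFLA L.differentiableAt).trans
        (congrArg (fun T => (fderiv ℝ F (L A)).comp T) L.fderiv)
    calc fderiv ℝ F (g t * A * i t) (g t * η * i t)
        = fderiv ℝ F (L A) (L η) := by rw [hLapp, hLapp]
      _ = fderiv ℝ F A η := by rw [hcomp]; rfl
  have hzero : HasDerivAt (fun t => fderiv ℝ F (g t * A * i t) (g t * η * i t)) 0 0 :=
    (hasDerivAt_const (0 : ℝ) (fderiv ℝ F A η)).congr_of_eventuallyEq hconst2
  have key := hh.unique hzero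
  change fderiv ℝ F A (W * η - η * W) + fderiv ℝ (fderiv ℝ F) A (W * A - A * W) η = 0 at key
  -- key : fderiv F A (Wη - ηW) + fderiv (fderiv F) A (WA - AW) η = 0
  have h1 : fderiv ℝ F A (η * W - W * η) = -(fderiv ℝ F A (W * η - η * W)) := by
    rw [← map_neg]
    congr 1
    noncomm_ring
  have h2 : fderiv ℝ (fderiv ℝ F) A (W * A - A * W) η
      = -(fderiv ℝ F A (W * η - η * W)) := by
    have := eq_neg_of_add_eq_zero_right key
    linarith [this]
  rw [h1, h2]
end

section
/- Let Γ ⊆ ℝⁿ be open, U ⊆ ℝ^m open, ψ : U → ℝ be C¹ with (p₁(κ),…,p_m(κ)) ∈ U for all κ ∈ Γ, and let f(κ) = ψ(p₁(κ),…,p_m(κ)) satisfy ∂f/∂κᵢ(κ) > 0 for all κ ∈ Γ and all i (f is strictly monotone). Let A be an n×n real matrix, diagonalisable with eigenvalues κ ∈ Γ, and let g be a symmetric positive definite matrix with gA = Aᵀg (A is g-selfadjoint). Set F'(A) = Σ_{l=1}^m l·∂_lψ(P₁(A),…,P_m(A))·A^{l−1}. Then for every nonzero ξ ∈ ℝⁿ,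 trace(F'(A) · g⁻¹ · ξξᵀ) > 0; that is, the bilinear form a ↦ trace(F'(A)·g⁻¹·â) is positive definite on symmetric rank-one forms ξ ⊗ ξ. -/
open Matrix

attribute [local instance] Matrix.normedAddCommGroup Matrix.normedSpace

lemma trace_mul_vecMulVec {n : ℕ} (M : Matrix (Fin n) (Fin n) ℝ) (ξ : Fin n → ℝ) :
    (M * Matrix.vecMulVec ξ ξ).trace = ξ ⬝ᵥ (M *ᵥ ξ) := by
  simp only [Matrix.trace, Matrix.diag, Matrix.mul_apply, Matrix.vecMulVec_apply,
    dotProduct, Matrix.mulVec, Finset.mul_sum]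
  exact Finset.sum_congr rfl fun k _ => Finset.sum_congr rfl fun j _ => by ring

lemma mulVec_dot {n : ℕ} (M : Matrix (Fin n) (Fin n) ℝ) (a b : Fin n → ℝ) :
    (M *ᵥ a) ⬝ᵥ b = a ⬝ᵥ (Mᵀ *ᵥ b) := by
  rw [dotProduct_comm, Matrix.dotProduct_mulVec, dotProduct_comm, Matrix.mulVec_transpose]

lemma dot_expand {n : ℕ} (M : Matrix (Fin n) (Fin n) ℝ) (a b : Fin n → ℝ) :
    a ⬝ᵥ (M *ᵥ b) = ∑ i, ∑ j, a i * (M i j * b j) := by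
  simp [dotProduct, Matrix.mulVec, Finset.mul_sum]

/-- Let `Γ ⊆ ℝⁿ` be open, `ψ` of class `C¹` on the open `U ⊆ ℝ^m`
with `(p₁(κ),…,p_m(κ)) ∈ U` for all `κ ∈ Γ`, and suppose the associated symmetric
function `f(κ) = ψ(p₁(κ),…,p_m(κ))` is strictly monotone on `Γ`. If `A` is
diagonalisable with eigenvalues `κ ∈ Γ` and `g`-selfadjoint for a symmetric positive
definite `g`, then for every nonzero `ξ ∈ ℝⁿ`,
`trace (F'(A) g⁻¹ (ξ ξᵀ)) > 0`. -/
theorem stmt_13 (n m : ℕ) (Γ : Set (Fin n → ℝ)) (hΓ : IsOpen Γ)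
    (U : Set (Fin m → ℝ)) (hU : IsOpen U)
    (ψ : (Fin m → ℝ) → ℝ) (hψ : ContDiffOn ℝ 1 ψ U)
    (hΓU : ∀ κ ∈ Γ, pvec n m κ ∈ U)
    (hmono : ∀ κ ∈ Γ, ∀ i : Fin n,
      0 < fderiv ℝ (fun x : Fin n → ℝ => ψ (pvec n m x)) κ (Pi.single i 1))
    (A : Matrix (Fin n) (Fin n) ℝ) (κ : Fin n → ℝ) (hκ : κ ∈ Γ)
    (S : Matrix (Fin n) (Fin n) ℝ) (hS : IsUnit S)
    (hdiag : S⁻¹ * A * S = Matrix.diagonal κ)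
    (g : Matrix (Fin n) (Fin n) ℝ) (hg : g.PosDef) (hgsym : g.IsSymm)
    (hsa : g * A = Aᵀ * g) :
    ∀ ξ : Fin n → ℝ, ξ ≠ 0 →
      0 < (Fprime n m ψ A * g⁻¹ * Matrix.vecMulVec ξ ξ).trace := by
  intro ξ hξ
  -- basic invertibility facts
  have hSd : IsUnit S.det := (Matrix.isUnit_iff_isUnit_det S).mp hS
  have hSi : S⁻¹ * S = 1 := Matrix.nonsing_inv_mul S hSd
  have hSi' : S * S⁻¹ = 1 := Matrix.mul_nonsing_inv S hSd
  have hgd : IsUnit g.det := (Matrix.isUnit_iff_isUnit_det g).mp hg.isUnit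
  have hgi' : g * g⁻¹ = 1 := Matrix.mul_nonsing_inv g hgd
  have hAS : A * S = S * Matrix.diagonal κ := by
    have h : S * (S⁻¹ * A * S) = S * Matrix.diagonal κ := by rw [hdiag]
    calc A * S = S * (S⁻¹ * A * S) := by
          rw [← mul_assoc, ← mul_assoc, hSi', one_mul]
      _ = S * Matrix.diagonal κ := h
  have hpow : ∀ k : ℕ, A ^ k * S = S * Matrix.diagonal κ ^ k := by
    intro k
    induction k with
    | zero => simp
    | succ k ih =>
        rw [pow_succ, pow_succ, mul_assoc, hAS, ← mul_assoc, ih, mul_assoc]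
  -- traces of powers
  have hPvec : Pvec n m A = pvec n m κ := by
    funext l
    show (A ^ ((l : ℕ) + 1)).trace = ∑ i, κ i ^ ((l : ℕ) + 1)
    have hAk : A ^ ((l : ℕ) + 1) = S * Matrix.diagonal κ ^ ((l : ℕ) + 1) * S⁻¹ := by
      rw [← hpow, mul_assoc, hSi', mul_one]
    rw [hAk, Matrix.trace_mul_cycle, hSi, one_mul, Matrix.diagonal_pow,
      Matrix.trace_diagonal]
    simp
  set p : Fin m → ℝ := pvec n m κ with hp
  set q : Fin n → ℝ :=
    fun i => ∑ l : Fin m, (((l : ℕ) + 1 : ℝ) * fderiv ℝ ψ p (Pi.single l 1)) * κ i ^ (l : ℕ)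
    with hqdef
  -- derivative of the symmetric function
  have hψdiff : HasFDerivAt ψ (fderiv ℝ ψ p) p := by
    have h1 : DifferentiableOn ℝ ψ U := hψ.differentiableOn one_ne_zero
    exact (h1.differentiableAt (hU.mem_nhds (hΓU κ hκ))).hasFDerivAt
  set φ' : Fin m → ((Fin n → ℝ) →L[ℝ] ℝ) :=
    fun l => ∑ j, ((((l : ℕ) + 1 : ℝ)) * κ j ^ (l : ℕ)) • ContinuousLinearMap.proj j
    with hφ'
  have hpv : HasFDerivAt (pvec n m) (ContinuousLinearMap.pi φ') κ := by
    have h : HasFDerivAt (fun (x : Fin n → ℝ) (l : Fin m) => ∑ i, x i ^ ((l : ℕ) + 1))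
        (ContinuousLinearMap.pi φ') κ := by
      refine (hasFDerivAt_pi
        (φ := fun (l : Fin m) (x : Fin n → ℝ) => ∑ i, x i ^ ((l : ℕ) + 1))
        (φ' := φ') (x := κ)).2 ?_
      intro l
      have hcoord : ∀ j : Fin n, HasFDerivAt (fun x : Fin n → ℝ => x j ^ ((l : ℕ) + 1))
          (((((l : ℕ) + 1 : ℝ)) * κ j ^ (l : ℕ)) •
            (ContinuousLinearMap.proj j : (Fin n → ℝ) →L[ℝ] ℝ)) κ := by
        intro j
        have h := HasDerivAt.comp_hasFDerivAt (𝕜 := ℝ) κ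
          (hasDerivAt_pow ((l : ℕ) + 1) (κ j))
          (hasFDerivAt_apply (𝕜 := ℝ) (F' := fun _ : Fin n => ℝ) j κ)
        simpa [Function.comp_def] using h
      exact HasFDerivAt.fun_sum fun j _ => hcoord j
    exact h
  have hcomp : HasFDerivAt (fun x : Fin n → ℝ => ψ (pvec n m x))
      ((fderiv ℝ ψ p).comp (ContinuousLinearMap.pi φ')) κ :=
    hψdiff.comp κ hpv
  have hLval : ∀ i : Fin n, (ContinuousLinearMap.pi φ') (Pi.single i 1)
      = fun l : Fin m => ((l : ℕ) + 1 : ℝ) * κ i ^ (l : ℕ) := by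
    intro i
    funext l
    simp only [ContinuousLinearMap.pi_apply, hφ', ContinuousLinearMap.sum_apply,
      ContinuousLinearMap.smul_apply, ContinuousLinearMap.proj_apply, smul_eq_mul]
    rw [Finset.sum_eq_single i]
    · simp
    · intro b _ hb; simp [Pi.single_apply, hb]
    · intro h; exact absurd (Finset.mem_univ i) h
  have hqpos : ∀ i : Fin n, 0 < q i := by
    intro i
    have h0 := hmono κ hκ i
    rw [hcomp.fderiv] at h0
    rw [ContinuousLinearMap.comp_apply, hLval i] at h0
    have hvec : (fun l : Fin m => ((l : ℕ) + 1 : ℝ) * κ i ^ (l : ℕ))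
        = ∑ l : Fin m, (((l : ℕ) + 1 : ℝ) * κ i ^ (l : ℕ)) •
            (Pi.single l (1 : ℝ) : Fin m → ℝ) := by
      rw [← Finset.univ_sum_single (fun l : Fin m => ((l : ℕ) + 1 : ℝ) * κ i ^ (l : ℕ))]
      exact Finset.sum_congr rfl fun l _ => by
        rw [← Pi.single_smul, smul_eq_mul, mul_one]
    rw [hvec, map_sum] at h0
    simp only [_root_.map_smul, smul_eq_mul] at h0
    have hqi : q i = ∑ l : Fin m,
        (((l : ℕ) + 1 : ℝ) * κ i ^ (l : ℕ)) * (fderiv ℝ ψ p) (Pi.single l 1) := by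
      simp only [hqdef]
      exact Finset.sum_congr rfl fun l _ => by ring
    rw [hqi]
    exact h0
  -- F' S = S diag q
  have hFS : Fprime n m ψ A * S = S * Matrix.diagonal q := by
    unfold Fprime
    rw [hPvec, Finset.sum_mul]
    have h1 : ∀ l : Fin m,
        ((((l : ℕ) + 1 : ℝ) * fderiv ℝ ψ p (Pi.single l 1)) • A ^ (l : ℕ)) * S
        = S * ((((l : ℕ) + 1 : ℝ) * fderiv ℝ ψ p (Pi.single l 1)) •
            Matrix.diagonal κ ^ (l : ℕ)) := by
      intro l
      rw [smul_mul_assoc, hpow, mul_smul_comm]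
    calc (∑ l : Fin m,
            ((((l : ℕ) + 1 : ℝ) * fderiv ℝ ψ p (Pi.single l 1)) • A ^ (l : ℕ)) * S)
        = ∑ l : Fin m, S * ((((l : ℕ) + 1 : ℝ) * fderiv ℝ ψ p (Pi.single l 1)) •
            Matrix.diagonal κ ^ (l : ℕ)) :=
          Finset.sum_congr rfl fun l _ => h1 l
      _ = S * ∑ l : Fin m, (((l : ℕ) + 1 : ℝ) * fderiv ℝ ψ p (Pi.single l 1)) •
            Matrix.diagonal κ ^ (l : ℕ) := by rw [Finset.mul_sum]
      _ = S * Matrix.diagonal q := by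
          congr 1
          ext i j
          simp only [Matrix.sum_apply, Matrix.smul_apply, Matrix.diagonal_pow, smul_eq_mul]
          by_cases hij : i = j
          · subst hij
            simp [hqdef, Matrix.diagonal_apply_eq]
          · simp [Matrix.diagonal_apply_ne _ hij, hij]
  -- the vectors
  set η : Fin n → ℝ := g⁻¹ *ᵥ ξ with hη
  set w : Fin n → ℝ := S⁻¹ *ᵥ η with hw
  have hgη : g *ᵥ η = ξ := by
    rw [hη, Matrix.mulVec_mulVec, hgi', Matrix.one_mulVec]
  have hSw : S *ᵥ w = η := by
    rw [hw, Matrix.mulVec_mulVec, hSi', Matrix.one_mulVec]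
  have hηne : η ≠ 0 := by
    intro h
    exact hξ (by rw [← hgη, h, Matrix.mulVec_zero])
  have hwne : w ≠ 0 := by
    intro h
    exact hηne (by rw [← hSw, h, Matrix.mulVec_zero])
  -- G = Sᵀ g S commutes with diagonal κ
  set G : Matrix (Fin n) (Fin n) ℝ := Sᵀ * g * S with hG
  have hGD : G * Matrix.diagonal κ = Matrix.diagonal κ * G := by
    calc G * Matrix.diagonal κ
        = Sᵀ * g * (S * Matrix.diagonal κ) := by rw [hG, mul_assoc]
      _ = Sᵀ * g * (A * S) := by rw [← hAS]
      _ = Sᵀ * (g * A) * S := by noncomm_ring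
      _ = Sᵀ * (Aᵀ * g) * S := by rw [hsa]
      _ = (Sᵀ * Aᵀ) * (g * S) := by noncomm_ring
      _ = (A * S)ᵀ * (g * S) := by rw [Matrix.transpose_mul]
      _ = (S * Matrix.diagonal κ)ᵀ * (g * S) := by rw [hAS]
      _ = Matrix.diagonal κ * (Sᵀ * g * S) := by
          rw [Matrix.transpose_mul, Matrix.diagonal_transpose]; noncomm_ring
      _ = Matrix.diagonal κ * G := by rw [hG]
  have hGoff : ∀ i j : Fin n, κ i ≠ κ j → G i j = 0 := by
    intro i j hej
    have h := congrFun (congrFun hGD i) j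
    rw [Matrix.mul_diagonal, Matrix.diagonal_mul] at h
    by_contra hGne
    rw [mul_comm (G i j) (κ j)] at h
    exact hej (mul_right_cancel₀ hGne h).symm
  -- reduce the trace to a quadratic form in w
  have eta1 : Fprime n m ψ A *ᵥ η = S *ᵥ (Matrix.diagonal q *ᵥ w) := by
    rw [← hSw, Matrix.mulVec_mulVec w (Fprime n m ψ A) S, hFS,
      ← Matrix.mulVec_mulVec w S (Matrix.diagonal q)]
  have hkey : (Fprime n m ψ A * g⁻¹ * Matrix.vecMulVec ξ ξ).trace
      = w ⬝ᵥ ((G * Matrix.diagonal q) *ᵥ w) := by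
    calc (Fprime n m ψ A * g⁻¹ * Matrix.vecMulVec ξ ξ).trace
        = ξ ⬝ᵥ ((Fprime n m ψ A * g⁻¹) *ᵥ ξ) := trace_mul_vecMulVec _ _
      _ = ξ ⬝ᵥ (Fprime n m ψ A *ᵥ η) := by
          rw [← Matrix.mulVec_mulVec ξ (Fprime n m ψ A) g⁻¹, hη]
      _ = (g *ᵥ η) ⬝ᵥ (Fprime n m ψ A *ᵥ η) := by rw [hgη]
      _ = η ⬝ᵥ (gᵀ *ᵥ (Fprime n m ψ A *ᵥ η)) := mulVec_dot g η _
      _ = η ⬝ᵥ (g *ᵥ (Fprime n m ψ A *ᵥ η)) := by rw [hgsym.eq]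
      _ = (S *ᵥ w) ⬝ᵥ (g *ᵥ (S *ᵥ (Matrix.diagonal q *ᵥ w))) := by rw [hSw, eta1]
      _ = w ⬝ᵥ (Sᵀ *ᵥ (g *ᵥ (S *ᵥ (Matrix.diagonal q *ᵥ w)))) := mulVec_dot S w _
      _ = w ⬝ᵥ ((G * Matrix.diagonal q) *ᵥ w) := by
          rw [Matrix.mulVec_mulVec w S (Matrix.diagonal q),
            Matrix.mulVec_mulVec w g (S * Matrix.diagonal q),
            Matrix.mulVec_mulVec w Sᵀ (g * (S * Matrix.diagonal q))]
          congr 1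
          rw [hG]
          noncomm_ring
  rw [hkey]
  -- symmetrize with square roots
  set y : Fin n → ℝ := fun i => Real.sqrt (q i) * w i with hy
  have hyq : w ⬝ᵥ ((G * Matrix.diagonal q) *ᵥ w) = y ⬝ᵥ (G *ᵥ y) := by
    rw [dot_expand, dot_expand]
    refine Finset.sum_congr rfl fun i _ => Finset.sum_congr rfl fun j _ => ?_
    rw [Matrix.mul_diagonal]
    simp only [hy]
    by_cases hGij : G i j = 0
    · rw [hGij]; ring
    · have hκij : κ i = κ j := by
        by_contra hne
        exact hGij (hGoff i j hne)
      have hqij : q i = q j := by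
        simp only [hqdef, hκij]
      have hs : Real.sqrt (q i) * Real.sqrt (q j) = q j := by
        rw [hqij, Real.mul_self_sqrt (hqpos j).le]
      calc w i * (G i j * q j * w j)
          = (Real.sqrt (q i) * Real.sqrt (q j)) * (w i * (G i j * w j)) := by
            rw [hs]; ring
        _ = Real.sqrt (q i) * w i * (G i j * (Real.sqrt (q j) * w j)) := by ring
  rw [hyq]
  -- positivity
  have hyne : y ≠ 0 := by
    intro h
    apply hwne
    funext i
    have h2 := congrFun h i
    simp only [hy, Pi.zero_apply] at h2
    have hs : Real.sqrt (q i) ≠ 0 := (Real.sqrt_pos.2 (hqpos i)).ne'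
    exact (mul_eq_zero.mp h2).resolve_left hs
  have hSy : S *ᵥ y ≠ 0 := by
    intro h
    apply hyne
    have h2 : S⁻¹ *ᵥ (S *ᵥ y) = y := by
      rw [Matrix.mulVec_mulVec, hSi, Matrix.one_mulVec]
    rw [← h2, h, Matrix.mulVec_zero]
  have hpos := hg.dotProduct_mulVec_pos hSy
  simp only [star_trivial] at hpos
  have hfin : (S *ᵥ y) ⬝ᵥ (g *ᵥ (S *ᵥ y)) = y ⬝ᵥ (G *ᵥ y) := by
    rw [mulVec_dot, Matrix.mulVec_mulVec y g S, Matrix.mulVec_mulVec y Sᵀ (g * S),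
      hG, ← mul_assoc]
  rw [← hfin]
  exact hpos
end

section
/- Let Γ ⊆ ℝⁿ be open, convex and symmetric under permutations of coordinates, U ⊆ ℝ^m open, ψ : U → ℝ be C² with (p₁(κ),…,p_m(κ)) ∈ U for all κ ∈ Γ, and suppose f(κ) = ψ(p₁(κ),…,p_m(κ)) is concave on Γ. Let F(A) = ψ(P₁(A),…,P_m(A)), let A be diagonalisable with S⁻¹AS = diag(κ) for some invertible S and κ ∈ Γ with pairwise distinct entries, and let η be an n×n real matrix such that S⁻¹ηS is a symmetric matrix. Then d²F(A)(η,η) ≤ 0. If instead f is convex on Γ, then d²F(A)(η,η) ≥ 0. -/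
attribute [local instance] Matrix.normedAddCommGroup Matrix.normedSpace

namespace Stmt14Aux

open Matrix Finset

variable {n : ℕ}

noncomputable def mulCLM (n : ℕ) : Matrix (Fin n) (Fin n) ℝ →L[ℝ]
    Matrix (Fin n) (Fin n) ℝ →L[ℝ] Matrix (Fin n) (Fin n) ℝ :=
  LinearMap.toContinuousLinearMap
    { toFun := fun X => LinearMap.toContinuousLinearMap (LinearMap.mul ℝ _ X)
      map_add' := fun X Y => by ext Z; simp [add_mul]
      map_smul' := fun r X => by ext Z; simp [smul_mul_assoc] }

lemma mulCLM_apply (X Y : Matrix (Fin n) (Fin n) ℝ) : mulCLM n X Y = X * Y := by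
  simp [mulCLM]

lemma isBBM_mul (n : ℕ) :
    IsBoundedBilinearMap ℝ
      (fun p : Matrix (Fin n) (Fin n) ℝ × Matrix (Fin n) (Fin n) ℝ => p.1 * p.2) := by
  have h := (mulCLM n).isBoundedBilinearMap
  have e : (fun p : Matrix (Fin n) (Fin n) ℝ × Matrix (Fin n) (Fin n) ℝ => mulCLM n p.1 p.2)
      = fun p : Matrix (Fin n) (Fin n) ℝ × Matrix (Fin n) (Fin n) ℝ => p.1 * p.2 :=
    funext fun p => mulCLM_apply _ _
  exact e ▸ h

lemma matmul {f g : ℝ → Matrix (Fin n) (Fin n) ℝ} {f' g' : Matrix (Fin n) (Fin n) ℝ}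
    {t : ℝ} (hf : HasDerivAt f f' t) (hg : HasDerivAt g g' t) :
    HasDerivAt (fun s => f s * g s) (f' * g t + f t * g') t := by
  have h := ((isBBM_mul n).hasFDerivAt (f t, g t)).comp_hasDerivAt t (hf.prodMk hg)
  exact h.congr_deriv (by simp [IsBoundedBilinearMap.deriv_apply, add_comm])

lemma contDiff_matpow (k : ℕ) : ContDiff ℝ 2 (fun X : Matrix (Fin n) (Fin n) ℝ => X ^ k) := by
  induction k with
  | zero => simpa [pow_zero] using contDiff_const (c := (1 : Matrix (Fin n) (Fin n) ℝ))
  | succ k ih =>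
    have : (fun X : Matrix (Fin n) (Fin n) ℝ => X ^ (k + 1))
        = (fun p : Matrix (Fin n) (Fin n) ℝ × Matrix (Fin n) (Fin n) ℝ => p.1 * p.2)
          ∘ fun X => (X ^ k, X) := by
      funext X; simp [pow_succ]
    rw [this]
    exact (isBBM_mul n).contDiff.comp (ih.prodMk contDiff_id)

noncomputable def traceCLM (n : ℕ) : Matrix (Fin n) (Fin n) ℝ →L[ℝ] ℝ :=
  LinearMap.toContinuousLinearMap (Matrix.traceLinearMap (Fin n) ℝ ℝ)

lemma traceCLM_apply (X : Matrix (Fin n) (Fin n) ℝ) : traceCLM n X = X.trace := by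
  simp [traceCLM]

lemma hasDerivAt_line (A η : Matrix (Fin n) (Fin n) ℝ) (t : ℝ) :
    HasDerivAt (fun s : ℝ => A + s • η) η t := by
  exact (((hasDerivAt_id t).smul_const η).const_add A).congr_deriv (one_smul ℝ η)

lemma hasDerivAt_pow_line (A η : Matrix (Fin n) (Fin n) ℝ) (k : ℕ) (t : ℝ) :
    HasDerivAt (fun s : ℝ => (A + s • η) ^ k)
      (∑ i ∈ Finset.range k, (A + t • η) ^ i * η * (A + t • η) ^ (k - 1 - i)) t := by
  induction k with
  | zero =>
    simp only [pow_zero, Finset.range_zero, Finset.sum_empty]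
    exact hasDerivAt_const t (1 : Matrix (Fin n) (Fin n) ℝ)
  | succ k ih =>
    have h := matmul ih (hasDerivAt_line A η t)
    have e : (fun s : ℝ => (A + s • η) ^ k * (A + s • η)) = fun s : ℝ => (A + s • η) ^ (k + 1) := by
      funext s; rw [← pow_succ]
    rw [e] at h
    convert h using 1
    set N := A + t • η with hN
    rw [Finset.sum_range_succ, Finset.sum_mul]
    have e2 : ∀ i ∈ Finset.range k,
        N ^ i * η * N ^ (k + 1 - 1 - i) = N ^ i * η * N ^ (k - 1 - i) * N := by
      intro i hi
      simp only [Finset.mem_range] at hi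
      have e : k + 1 - 1 - i = (k - 1 - i) + 1 := by omega
      rw [e, pow_succ, ← mul_assoc]
    rw [Finset.sum_congr rfl e2]
    have e3 : N ^ (k + 1 - 1 - k) = 1 := by norm_num
    rw [e3, mul_one]

lemma trace_sum_cyclic (N B : Matrix (Fin n) (Fin n) ℝ) (k : ℕ) :
    (∑ i ∈ Finset.range k, N ^ i * B * N ^ (k - 1 - i)).trace
      = (k : ℝ) * (N ^ (k - 1) * B).trace := by
  rw [Matrix.trace_sum]
  have e : ∀ i ∈ Finset.range k,
      (N ^ i * B * N ^ (k - 1 - i)).trace = (N ^ (k - 1) * B).trace := by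
    intro i hi
    simp only [Finset.mem_range] at hi
    rw [Matrix.trace_mul_comm, ← Matrix.mul_assoc, ← pow_add]
    congr 3
    omega
  rw [Finset.sum_congr rfl e, Finset.sum_const, Finset.card_range, nsmul_eq_mul]

lemma concave_deriv2_nonpos {s : Set ℝ} (hs : IsOpen s) (h0 : (0:ℝ) ∈ s) {φ φ' : ℝ → ℝ} {c : ℝ}
    (hφ : ConcaveOn ℝ s φ) (hd : ∀ t ∈ s, HasDerivAt φ (φ' t) t)
    (hd2 : HasDerivAt φ' c 0) : c ≤ 0 := by
  have htends : Filter.Tendsto (slope φ' 0) (nhdsWithin 0 (Set.Ioi 0)) (nhds c) := by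
    have h := hasDerivAt_iff_tendsto_slope.mp hd2
    exact h.mono_left (nhdsWithin_mono 0 (fun x hx => Set.mem_compl_singleton_iff.mpr
      (ne_of_gt hx)))
  refine le_of_tendsto htends ?_
  filter_upwards [Filter.inter_mem (mem_nhdsWithin_of_mem_nhds (hs.mem_nhds h0))
    self_mem_nhdsWithin] with t ht
  obtain ⟨hts, ht0⟩ := ht
  have ht0' : (0:ℝ) < t := ht0
  have h1 : φ' t ≤ slope φ 0 t := hφ.le_slope_of_hasDerivAt h0 hts ht0' (hd t hts)
  have h2 : slope φ 0 t ≤ φ' 0 := hφ.slope_le_of_hasDerivAt h0 hts ht0' (hd 0 h0)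
  rw [slope_def_field]
  apply div_nonpos_of_nonpos_of_nonneg <;> linarith

variable {E : Type*} [NormedAddCommGroup E] [NormedSpace ℝ E]

lemma curve_part1 {U : Set E} (hU : IsOpen U) {ψ : E → ℝ} (hψ : ContDiffOn ℝ 2 ψ U)
    {u u' : ℝ → E} (hu : ∀ t, HasDerivAt u (u' t) t) {t : ℝ} (ht : u t ∈ U) :
    HasDerivAt (fun r => ψ (u r)) (fderiv ℝ ψ (u t) (u' t)) t := by
  have hψd : DifferentiableAt ℝ ψ (u t) :=
    (hψ.differentiableOn (by norm_num)).differentiableAt (hU.mem_nhds ht)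
  exact hψd.hasFDerivAt.comp_hasDerivAt t (hu t)

lemma curve_part2 {U : Set E} (hU : IsOpen U) {ψ : E → ℝ} (hψ : ContDiffOn ℝ 2 ψ U)
    {u u' : ℝ → E} {u'' : E}
    (hu : ∀ t, HasDerivAt u (u' t) t) (hu2 : HasDerivAt u' u'' 0) (h0 : u 0 ∈ U) :
    HasDerivAt (fun t => fderiv ℝ ψ (u t) (u' t))
      (fderiv ℝ (fderiv ℝ ψ) (u 0) (u' 0) (u' 0) + fderiv ℝ ψ (u 0) u'') 0 := by
  have hψ1 : ContDiffOn ℝ 1 (fderiv ℝ ψ) U := hψ.fderiv_of_isOpen hU (by norm_num)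
  have hdψ : DifferentiableAt ℝ (fderiv ℝ ψ) (u 0) :=
    (hψ1.differentiableOn (by norm_num)).differentiableAt (hU.mem_nhds h0)
  have hL : HasDerivAt (fun t => fderiv ℝ ψ (u t)) (fderiv ℝ (fderiv ℝ ψ) (u 0) (u' 0)) 0 :=
    hdψ.hasFDerivAt.comp_hasDerivAt 0 (hu 0)
  exact hL.clm_apply hu2

lemma curve_part3 {U : Set E} (hU : IsOpen U) {ψ : E → ℝ} (hψ : ContDiffOn ℝ 2 ψ U)
    {u u' : ℝ → E} {u'' : E}
    (hu : ∀ t, HasDerivAt u (u' t) t) (hu2 : HasDerivAt u' u'' 0) (h0 : u 0 ∈ U) :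
    deriv (deriv (fun t => ψ (u t))) 0
      = fderiv ℝ (fderiv ℝ ψ) (u 0) (u' 0) (u' 0) + fderiv ℝ ψ (u 0) u'' := by
  have hucont : Continuous u := continuous_iff_continuousAt.mpr fun t => (hu t).continuousAt
  have hW : IsOpen (u ⁻¹' U) := hU.preimage hucont
  have hev : deriv (fun t => ψ (u t)) =ᶠ[nhds (0:ℝ)] fun t => fderiv ℝ ψ (u t) (u' t) := by
    filter_upwards [hW.mem_nhds h0] with t ht
    exact (curve_part1 hU hψ hu ht).deriv
  rw [hev.deriv_eq]
  exact (curve_part2 hU hψ hu hu2 h0).deriv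

lemma second_fderiv_line {F : E → ℝ} {V : Set E} (hV : IsOpen V) (hF : ContDiffOn ℝ 2 F V)
    {A : E} (hA : A ∈ V) (η : E) :
    fderiv ℝ (fderiv ℝ F) A η η = deriv (deriv (fun t : ℝ => F (A + t • η))) 0 := by
  have hline : ∀ t : ℝ, HasDerivAt (fun s : ℝ => A + s • η) η t := fun t => by
    simpa using ((hasDerivAt_id t).smul_const η).const_add A
  have hFd : ∀ x ∈ V, DifferentiableAt ℝ F x := fun x hx =>
    (hF.differentiableOn (by norm_num)).differentiableAt (hV.mem_nhds hx)
  have hcont : Continuous (fun s : ℝ => A + s • η) :=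
    continuous_const.add (continuous_id.smul continuous_const)
  have hW : IsOpen ((fun s : ℝ => A + s • η) ⁻¹' V) := hV.preimage hcont
  have h0W : (0:ℝ) ∈ (fun s : ℝ => A + s • η) ⁻¹' V := by
    simp only [Set.mem_preimage, zero_smul, add_zero]; exact hA
  have hev : deriv (fun t => F (A + t • η)) =ᶠ[nhds (0:ℝ)] fun t => fderiv ℝ F (A + t • η) η := by
    filter_upwards [hW.mem_nhds h0W] with t ht
    exact (((hFd _ ht).hasFDerivAt).comp_hasDerivAt t (hline t)).deriv
  rw [hev.deriv_eq]
  have hF1 : ContDiffOn ℝ 1 (fderiv ℝ F) V := hF.fderiv_of_isOpen hV (by norm_num)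
  have hdF : DifferentiableAt ℝ (fderiv ℝ F) A :=
    (hF1.differentiableOn (by norm_num)).differentiableAt (hV.mem_nhds hA)
  have hL : HasDerivAt (fun t : ℝ => fderiv ℝ F (A + t • η)) (fderiv ℝ (fderiv ℝ F) A η) 0 :=
    hdF.hasFDerivAt.comp_hasDerivAt_of_eq 0 (hline 0) (by simp)
  have happ : HasDerivAt (fun t : ℝ => fderiv ℝ F (A + t • η) η)
      (fderiv ℝ (fderiv ℝ F) A η η) 0 := by
    have h := hL.clm_apply (hasDerivAt_const 0 η)
    simpa using h
  exact happ.deriv.symm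



lemma concave_line {n m : ℕ} {Γ : Set (Fin n → ℝ)} {ψ : (Fin m → ℝ) → ℝ}
    (hcon : ConcaveOn ℝ Γ (fun x : Fin n → ℝ => ψ (pvec n m x))) (κ w : Fin n → ℝ) :
    ConcaveOn ℝ ((fun t : ℝ => κ + t • w) ⁻¹' Γ)
      (fun t : ℝ => ψ (pvec n m (κ + t • w))) := by
  have h := hcon.comp_affineMap (AffineMap.lineMap (κ : Fin n → ℝ) (κ + w))
  have e : ∀ t : ℝ, (AffineMap.lineMap (κ : Fin n → ℝ) (κ + w)) t = κ + t • w := by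
    intro t; rw [AffineMap.lineMap_apply]
    show t • (κ + w - κ) + κ = κ + t • w
    rw [add_sub_cancel_left]; exact add_comm _ _
  have hfun : ((fun x : Fin n → ℝ => ψ (pvec n m x))
        ∘ (AffineMap.lineMap (κ : Fin n → ℝ) (κ + w)))
      = fun t : ℝ => ψ (pvec n m (κ + t • w)) := funext fun t => by
    rw [Function.comp_apply, e t]
  have hset : (AffineMap.lineMap (κ : Fin n → ℝ) (κ + w)) ⁻¹' Γ
      = (fun t : ℝ => κ + t • w) ⁻¹' Γ :=
    Set.ext fun t => by rw [Set.mem_preimage, Set.mem_preimage, e t]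
  rw [hfun, hset] at h; exact h

lemma hasDerivAt_pvec_line (n m : ℕ) (κ w : Fin n → ℝ) (t : ℝ) :
    HasDerivAt (fun s : ℝ => pvec n m (κ + s • w))
      (fun l => (((l:ℕ)+1 : ℕ) : ℝ) * ∑ p, (κ p + t * w p) ^ (l:ℕ) * w p) t := by
  rw [hasDerivAt_pi]
  intro l
  have hp : ∀ p : Fin n, HasDerivAt (fun s : ℝ => (κ p + s * w p) ^ ((l:ℕ)+1))
      ((((l:ℕ)+1 : ℕ):ℝ) * (κ p + t * w p) ^ ((l:ℕ)+1-1) * w p) t := fun p =>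
    ((hasDerivAt_mul_const (w p)).const_add (κ p)).pow _
  have h := HasDerivAt.fun_sum (fun p (_ : p ∈ Finset.univ) => hp p)
  have e : ∑ p, (((l:ℕ)+1 : ℕ):ℝ) * (κ p + t * w p) ^ ((l:ℕ)+1-1) * w p
      = (((l:ℕ)+1 : ℕ) : ℝ) * ∑ p, (κ p + t * w p) ^ (l:ℕ) * w p := by
    rw [Finset.mul_sum]; apply Finset.sum_congr rfl; intro p _
    rw [Nat.add_sub_cancel]; ring
  exact e ▸ h

theorem master (n m : ℕ) (Γ : Set (Fin n → ℝ)) (hΓopen : IsOpen Γ)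
    (hΓsym : ∀ (π : Equiv.Perm (Fin n)), ∀ κ ∈ Γ, (fun i => κ (π i)) ∈ Γ)
    (U : Set (Fin m → ℝ)) (hU : IsOpen U)
    (ψ : (Fin m → ℝ) → ℝ) (hψ : ContDiffOn ℝ 2 ψ U)
    (hΓU : ∀ κ ∈ Γ, pvec n m κ ∈ U)
    (A : Matrix (Fin n) (Fin n) ℝ) (κ : Fin n → ℝ) (hκ : κ ∈ Γ)
    (hκdist : Function.Injective κ)
    (S : Matrix (Fin n) (Fin n) ℝ) (hS : IsUnit S)
    (hdiag : S⁻¹ * A * S = Matrix.diagonal κ)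
    (η : Matrix (Fin n) (Fin n) ℝ) (hη : (S⁻¹ * η * S).IsSymm)
    (hcon : ConcaveOn ℝ Γ (fun x : Fin n → ℝ => ψ (pvec n m x))) :
    fderiv ℝ (fderiv ℝ (fun X : Matrix (Fin n) (Fin n) ℝ => ψ (Pvec n m X))) A η η ≤ 0 := by
  classical
  set B := S⁻¹ * η * S with hB
  set D := Matrix.diagonal κ with hD
  have hSd : IsUnit S.det := (Matrix.isUnit_iff_isUnit_det S).mp hS
  have hinv : S⁻¹ * S = 1 := Matrix.nonsing_inv_mul S hSd
  have hinv' : S * S⁻¹ = 1 := Matrix.mul_nonsing_inv S hSd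
  have hcancel : ∀ Z : Matrix (Fin n) (Fin n) ℝ, S⁻¹ * (S * Z) = Z := fun Z => by
    rw [← Matrix.mul_assoc, hinv, Matrix.one_mul]
  have hconj : ∀ X Y : Matrix (Fin n) (Fin n) ℝ,
      (S * X * S⁻¹) * (S * Y * S⁻¹) = S * (X * Y) * S⁻¹ := by
    intro X Y; simp only [Matrix.mul_assoc]; rw [hcancel]
  have hA : A = S * D * S⁻¹ := by
    rw [← hdiag]
    simp only [Matrix.mul_assoc]
    rw [hinv', Matrix.mul_one, ← Matrix.mul_assoc, hinv', Matrix.one_mul]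
  have hη2 : η = S * B * S⁻¹ := by
    rw [hB]
    simp only [Matrix.mul_assoc]
    rw [hinv', Matrix.mul_one, ← Matrix.mul_assoc, hinv', Matrix.one_mul]
  have hconjpow : ∀ (X : Matrix (Fin n) (Fin n) ℝ) (k : ℕ),
      (S * X * S⁻¹) ^ k = S * X ^ k * S⁻¹ := by
    intro X k; induction k with
    | zero => rw [pow_zero, pow_zero, Matrix.mul_one, hinv']
    | succ k ih => rw [pow_succ, ih, pow_succ, ← hconj]
  have htraceconj : ∀ X : Matrix (Fin n) (Fin n) ℝ, (S * X * S⁻¹).trace = X.trace := by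
    intro X; rw [Matrix.trace_mul_comm, ← Matrix.mul_assoc, hinv, Matrix.one_mul]
  -- trace identities
  have htr1 : ∀ l : ℕ, (A ^ l * η).trace = ∑ p, κ p ^ l * B p p := by
    intro l
    have e : A ^ l * η = S * (D ^ l * B) * S⁻¹ := by rw [hA, hη2, hconjpow, hconj]
    rw [e, htraceconj, hD, Matrix.diagonal_pow]
    simp only [Matrix.trace, Matrix.diag, Matrix.diagonal_mul, Pi.pow_apply]
  have htr2 : ∀ i j : ℕ, (A ^ i * η * A ^ j * η).trace
      = ∑ p, ∑ q, κ p ^ i * B p q * (κ q ^ j * B q p) := by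
    intro i j
    have e : A ^ i * η * A ^ j * η = S * (D ^ i * B * D ^ j * B) * S⁻¹ := by
      rw [hA, hη2, hconjpow, hconjpow, hconj, hconj, hconj]
    rw [e, htraceconj]
    rw [Matrix.mul_assoc (D ^ i * B) (D ^ j) B, hD, Matrix.diagonal_pow, Matrix.diagonal_pow]
    simp only [Matrix.trace, Matrix.diag, Matrix.mul_apply, Matrix.diagonal_apply, ite_mul,
      zero_mul, Finset.sum_ite_eq, Finset.mem_univ, if_true, Pi.pow_apply]
  -- the function F and its domain
  have hPvec : ContDiff ℝ 2 (Pvec n m) := by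
    rw [contDiff_pi]
    intro l
    have h := (traceCLM n).contDiff.comp (contDiff_matpow (n := n) ((l:ℕ)+1))
    exact h
  have hVopen : IsOpen (Pvec n m ⁻¹' U) := hU.preimage hPvec.continuous
  have hFV : ContDiffOn ℝ 2 (fun X : Matrix (Fin n) (Fin n) ℝ => ψ (Pvec n m X))
      (Pvec n m ⁻¹' U) := hψ.comp hPvec.contDiffOn (fun x hx => hx)
  have ha : Pvec n m A = pvec n m κ := by
    funext l
    show (A ^ ((l:ℕ)+1)).trace = pvec n m κ l
    rw [hA, hconjpow, htraceconj, hD, Matrix.diagonal_pow, Matrix.trace_diagonal]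
    simp [pvec]
  have haU : pvec n m κ ∈ U := hΓU κ hκ
  have hAV : A ∈ Pvec n m ⁻¹' U := by
    show Pvec n m A ∈ U; rw [ha]; exact haU
  -- curve u on the matrix side
  set a := pvec n m κ with haa
  set u : ℝ → (Fin m → ℝ) := fun t => Pvec n m (A + t • η) with hu_def
  set u' : ℝ → (Fin m → ℝ) :=
    fun t l => (((l:ℕ)+1 : ℕ) : ℝ) * ((A + t • η) ^ (l:ℕ) * η).trace with hu'_def
  have hu : ∀ t, HasDerivAt u (u' t) t := by
    intro t
    rw [hasDerivAt_pi]
    intro l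
    have h := (traceCLM n).hasFDerivAt.comp_hasDerivAt t
      (hasDerivAt_pow_line A η ((l:ℕ)+1) t)
    change HasDerivAt _ ((∑ i ∈ Finset.range ((l:ℕ)+1),
        (A + t • η) ^ i * η * (A + t • η) ^ ((l:ℕ)+1-1-i)).trace) t at h
    have e : (∑ i ∈ Finset.range ((l:ℕ)+1),
        (A + t • η) ^ i * η * (A + t • η) ^ ((l:ℕ)+1-1-i)).trace = u' t l := by
      rw [trace_sum_cyclic, Nat.add_sub_cancel, hu'_def]
    exact e ▸ h
  set c2 : Fin m → ℝ := fun l => (((l:ℕ)+1 : ℕ) : ℝ) *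
      ∑ i ∈ Finset.range (l:ℕ), ∑ p, ∑ q,
        κ p ^ i * B p q * (κ q ^ ((l:ℕ)-1-i) * B q p) with hc2_def
  have hu2 : HasDerivAt u' c2 0 := by
    rw [hasDerivAt_pi]
    intro l
    have hml := matmul (hasDerivAt_pow_line A η (l:ℕ) 0) (hasDerivAt_const (0:ℝ) η)
    have h := ((traceCLM n).hasFDerivAt.comp_hasDerivAt 0 hml).const_mul
      ((((l:ℕ)+1 : ℕ) : ℝ))
    simp only [traceCLM_apply, zero_smul, add_zero, Matrix.mul_zero] at h
    have e : (((l:ℕ)+1:ℕ):ℝ) * ((∑ i ∈ Finset.range (l:ℕ),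
        A ^ i * η * A ^ ((l:ℕ)-1-i)) * η).trace = c2 l := by
      simp only [hc2_def]
      rw [Finset.sum_mul, Matrix.trace_sum]
      congr 1
      exact Finset.sum_congr rfl fun i _ => htr2 i ((l:ℕ)-1-i)
    exact e ▸ h
  have hu0 : u 0 = a := by
    rw [hu_def]
    show Pvec n m (A + (0:ℝ) • η) = a
    rw [show A + (0:ℝ) • η = A by simp, ha]
  set b : Fin m → ℝ := fun l => (((l:ℕ)+1 : ℕ) : ℝ) * ∑ p, κ p ^ (l:ℕ) * B p p with hb_def
  have hu'0 : u' 0 = b := by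
    funext l
    rw [hu'_def, hb_def]
    show (((l:ℕ)+1 : ℕ) : ℝ) * ((A + (0:ℝ) • η) ^ (l:ℕ) * η).trace = _
    rw [show A + (0:ℝ) • η = A by simp, htr1]
  have h0uU : u 0 ∈ U := by rw [hu0]; exact haU
  -- main identity for the matrix side
  have hmain : fderiv ℝ (fderiv ℝ (fun X : Matrix (Fin n) (Fin n) ℝ => ψ (Pvec n m X))) A η η
      = fderiv ℝ (fderiv ℝ ψ) a b b + fderiv ℝ ψ a c2 := by
    refine (second_fderiv_line hVopen hFV hAV η).trans ?_
    have h3 := curve_part3 hU hψ hu hu2 h0uU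
    rw [hu0, hu'0] at h3
    exact h3
  -- the vector-side curve v along direction w
  set w : Fin n → ℝ := fun p => B p p with hw_def
  set v : ℝ → (Fin m → ℝ) := fun t => pvec n m (κ + t • w) with hv_def
  set v' : ℝ → (Fin m → ℝ) :=
    fun t l => (((l:ℕ)+1 : ℕ) : ℝ) * ∑ p, (κ p + t * w p) ^ (l:ℕ) * w p with hv'_def
  have hv : ∀ t, HasDerivAt v (v' t) t := fun t => hasDerivAt_pvec_line n m κ w t
  set d2 : Fin m → ℝ := fun l => (((l:ℕ)+1 : ℕ) : ℝ) *
      ∑ p, ((l:ℕ):ℝ) * κ p ^ ((l:ℕ)-1) * w p * w p with hd2_def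
  have hv2 : HasDerivAt v' d2 0 := by
    rw [hasDerivAt_pi]
    intro l
    have hp : ∀ p : Fin n, HasDerivAt (fun s : ℝ => (κ p + s * w p) ^ (l:ℕ) * w p)
        (((l:ℕ):ℝ) * (κ p + 0 * w p) ^ ((l:ℕ)-1) * w p * w p) 0 := fun p =>
      ((((hasDerivAt_mul_const (w p)).const_add (κ p)).pow _).mul_const (w p))
    have h := (HasDerivAt.fun_sum (fun p (_ : p ∈ Finset.univ) => hp p)).const_mul
      ((((l:ℕ)+1 : ℕ) : ℝ))
    simp only [zero_mul, add_zero] at h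
    exact h
  have hv0 : v 0 = a := by
    rw [hv_def]
    show pvec n m (κ + (0:ℝ) • w) = a
    rw [show κ + (0:ℝ) • w = κ by simp]
  have hv'0 : v' 0 = b := by
    funext l
    rw [hv'_def, hb_def]
    simp only [zero_mul, add_zero, hw_def]
  have h0vU : v 0 ∈ U := by rw [hv0]; exact haU
  -- Q ≤ 0 by concavity along the line
  have hQ : fderiv ℝ (fderiv ℝ ψ) a b b + fderiv ℝ ψ a d2 ≤ 0 := by
    have hJopen : IsOpen ((fun t : ℝ => κ + t • w) ⁻¹' Γ) :=
      hΓopen.preimage (continuous_const.add (continuous_id.smul continuous_const))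
    have h0J : (0:ℝ) ∈ (fun t : ℝ => κ + t • w) ⁻¹' Γ := by
      show κ + (0:ℝ) • w ∈ Γ; rw [show κ + (0:ℝ) • w = κ by simp]; exact hκ
    have hconc := concave_line hcon κ w
    have hφd : ∀ t ∈ (fun t : ℝ => κ + t • w) ⁻¹' Γ,
        HasDerivAt (fun r => ψ (v r)) (fderiv ℝ ψ (v t) (v' t)) t := by
      intro t ht
      exact curve_part1 hU hψ hv (hΓU _ ht)
    have hφd2 : HasDerivAt (fun t => fderiv ℝ ψ (v t) (v' t))
        (fderiv ℝ (fderiv ℝ ψ) a b b + fderiv ℝ ψ a d2) 0 := by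
      have h := curve_part2 hU hψ hv hv2 h0vU
      rw [hv0, hv'0] at h
      exact h
    exact concave_deriv2_nonpos hJopen h0J hconc hφd hφd2
  -- splitting c2 into d2 plus off-diagonal part
  set T : Fin n → Fin n → (Fin m → ℝ) := fun p q l => (((l:ℕ)+1 : ℕ) : ℝ) *
      ∑ i ∈ Finset.range (l:ℕ), κ p ^ i * κ q ^ ((l:ℕ)-1-i) with hT_def
  have hsplit : c2 = d2 + ∑ p, ∑ q ∈ Finset.univ.erase p, (B p q * B q p) • T p q := by
    funext l
    set k := (l:ℕ) with hk
    have hrhs : (d2 + ∑ p, ∑ q ∈ Finset.univ.erase p, (B p q * B q p) • T p q) l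
        = d2 l + ∑ p, ∑ q ∈ Finset.univ.erase p, (B p q * B q p) * T p q l := by
      simp [Finset.sum_apply]
    rw [hrhs, hc2_def, hd2_def, hT_def]
    simp only
    -- reduce to a scalar sum identity
    rw [Finset.sum_comm]
    -- now ∑ p ∑ i ∑ q
    have e1 : ∀ p : Fin n, ∑ i ∈ Finset.range k, ∑ q,
          κ p ^ i * B p q * (κ q ^ (k-1-i) * B q p)
        = (∑ i ∈ Finset.range k, κ p ^ i * B p p * (κ p ^ (k-1-i) * B p p))
          + ∑ q ∈ Finset.univ.erase p, ∑ i ∈ Finset.range k,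
              κ p ^ i * B p q * (κ q ^ (k-1-i) * B q p) := by
      intro p
      rw [Finset.sum_comm]
      rw [← Finset.add_sum_erase _ _ (Finset.mem_univ p)]
    rw [Finset.sum_congr rfl fun p _ => e1 p, Finset.sum_add_distrib, mul_add]
    congr 1
    · -- diagonal part equals d2 l
      congr 1
      apply Finset.sum_congr rfl; intro p _
      have ed : ∀ i ∈ Finset.range k, κ p ^ i * B p p * (κ p ^ (k-1-i) * B p p)
          = κ p ^ (k-1) * (B p p * B p p) := by
        intro i hi
        simp only [Finset.mem_range] at hi
        have : κ p ^ i * κ p ^ (k-1-i) = κ p ^ (k-1) := by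
          rw [← pow_add]; congr 1; omega
        calc κ p ^ i * B p p * (κ p ^ (k-1-i) * B p p)
            = κ p ^ i * κ p ^ (k-1-i) * (B p p * B p p) := by ring
          _ = κ p ^ (k-1) * (B p p * B p p) := by rw [this]
      rw [Finset.sum_congr rfl ed, Finset.sum_const, Finset.card_range, nsmul_eq_mul]
      ring
    · -- off-diagonal part
      rw [Finset.mul_sum]
      apply Finset.sum_congr rfl; intro p _
      rw [Finset.mul_sum]
      apply Finset.sum_congr rfl; intro q _
      rw [Finset.mul_sum, Finset.mul_sum, Finset.mul_sum]
      apply Finset.sum_congr rfl; intro i _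
      ring
  -- the off-diagonal coefficients are ≤ 0
  have hToff : ∀ p q : Fin n, q ≠ p → fderiv ℝ ψ a (T p q) ≤ 0 := by
    intro p q hqp
    set d : Fin n → ℝ := fun r => (if r = p then (1:ℝ) else 0) - (if r = q then 1 else 0)
      with hdd
    set μ : ℝ → Fin n → ℝ := fun t => κ + t • d with hμ_def
    set c : ℝ := κ q - κ p with hc_def
    have hcne : c ≠ 0 := sub_ne_zero.mpr (fun h => hqp (hκdist h))
    have hμapp : ∀ t r, μ t r = κ r + t * d r := fun t r => rfl
    have hdp : d p = 1 := by simp [hdd, (Ne.symm hqp : p ≠ q)]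
    have hdq : d q = -1 := by simp [hdd, hqp]
    have hswap : ∀ t : ℝ, pvec n m (μ (c - t)) = pvec n m (μ t) := by
      intro t; funext l
      show ∑ r, (μ (c - t)) r ^ ((l:ℕ)+1) = ∑ r, (μ t) r ^ ((l:ℕ)+1)
      refine Fintype.sum_equiv (Equiv.swap p q) _ _ ?_
      intro r
      congr 1
      rcases eq_or_ne r p with rfl | hrp
      · rw [Equiv.swap_apply_left, hμapp, hμapp, hdq, hdp, hc_def]; ring
      rcases eq_or_ne r q with rfl | hrq
      · rw [Equiv.swap_apply_right, hμapp, hμapp, hdp, hdq, hc_def]; ring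
      · rw [Equiv.swap_apply_of_ne_of_ne hrp hrq, hμapp, hμapp]
        have : d r = 0 := by simp [hdd, hrp, hrq]
        rw [this]; ring
    have hμc : μ c ∈ Γ := by
      have hperm := hΓsym (Equiv.swap p q) κ hκ
      have e : μ c = fun i => κ (Equiv.swap p q i) := by
        funext r
        rcases eq_or_ne r p with rfl | hrp
        · rw [hμapp, hdp, Equiv.swap_apply_left, hc_def]; ring
        rcases eq_or_ne r q with rfl | hrq
        · rw [hμapp, hdq, Equiv.swap_apply_right, hc_def]; ring
        · rw [hμapp, Equiv.swap_apply_of_ne_of_ne hrp hrq]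
          have : d r = 0 := by simp [hdd, hrp, hrq]
          rw [this]; ring
      rw [e]; exact hperm
    have hJ2open : IsOpen (μ ⁻¹' Γ) := by
      rw [hμ_def]
      exact hΓopen.preimage (continuous_const.add (continuous_id.smul continuous_const))
    have h0J2 : (0:ℝ) ∈ μ ⁻¹' Γ := by
      show μ 0 ∈ Γ; rw [show μ 0 = κ by rw [hμ_def]; simp]; exact hκ
    have hcJ2 : c ∈ μ ⁻¹' Γ := hμc
    have hconc2 : ConcaveOn ℝ (μ ⁻¹' Γ) (fun t => ψ (pvec n m (μ t))) := concave_line hcon κ d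
    -- derivative of φ at 0
    have h0μU : pvec n m (μ 0) ∈ U := by
      rw [show μ 0 = κ by rw [hμ_def]; simp]; exact haU
    have hder0 := curve_part1 hU hψ (hasDerivAt_pvec_line n m κ d) h0μU
    -- identify the derivative value
    have hvec : (fun l : Fin m => (((l:ℕ)+1 : ℕ) : ℝ) * ∑ r, (κ r + 0 * d r) ^ (l:ℕ) * d r)
        = (κ p - κ q) • T p q := by
      funext l
      have e1 : ∑ r, (κ r + 0 * d r) ^ (l:ℕ) * d r = κ p ^ (l:ℕ) - κ q ^ (l:ℕ) := by
        simp [hdd, mul_sub, Finset.sum_sub_distrib, mul_ite, mul_one, mul_zero,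
          Finset.sum_ite_eq']
      rw [e1]
      have e2 := geom_sum₂_mul (κ p) (κ q) (l:ℕ)
      show (((l:ℕ)+1 : ℕ) : ℝ) * (κ p ^ (l:ℕ) - κ q ^ (l:ℕ))
          = (κ p - κ q) * ((((l:ℕ)+1 : ℕ) : ℝ) * ∑ i ∈ Finset.range (l:ℕ),
              κ p ^ i * κ q ^ ((l:ℕ)-1-i))
      rw [← e2]; ring
    have hμ0a : pvec n m (μ 0) = a := by
      rw [show μ 0 = κ by rw [hμ_def]; simp]
    rw [hμ0a, hvec] at hder0
    have hder : HasDerivAt (fun t => ψ (pvec n m (μ t)))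
        ((κ p - κ q) * fderiv ℝ ψ a (T p q)) 0 := by
      have := hder0
      rwa [_root_.map_smul, smul_eq_mul] at this
    -- symmetry value
    have hφc : ψ (pvec n m (μ c)) = ψ (pvec n m (μ 0)) := by
      have h := hswap c
      rw [sub_self] at h
      exact (congrArg ψ h).symm
    rcases lt_or_gt_of_ne hcne with hneg | hpos
    · -- c < 0, i.e. κ q < κ p
      have hle := hconc2.le_slope_of_hasDerivAt hcJ2 h0J2 hneg hder
      rw [slope_def_field] at hle
      have : ((fun t => ψ (pvec n m (μ t))) 0 - (fun t => ψ (pvec n m (μ t))) c) / (0 - c)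
          = 0 := by
        simp only
        rw [hφc, sub_self, zero_div]
      rw [this] at hle
      have hcpos : 0 < κ p - κ q := by rw [hc_def] at hneg; linarith
      nlinarith
    · -- c > 0, i.e. κ p < κ q
      have hle := hconc2.slope_le_of_hasDerivAt h0J2 hcJ2 hpos hder
      rw [slope_def_field] at hle
      have : ((fun t => ψ (pvec n m (μ t))) c - (fun t => ψ (pvec n m (μ t))) 0) / (c - 0)
          = 0 := by
        simp only
        rw [hφc, sub_self, zero_div]
      rw [this] at hle
      have hcneg : κ p - κ q < 0 := by rw [hc_def] at hpos; linarith
      nlinarith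
  -- put everything together
  have hsum : fderiv ℝ ψ a c2 = fderiv ℝ ψ a d2
      + ∑ p, ∑ q ∈ Finset.univ.erase p, (B p q * B q p) * fderiv ℝ ψ a (T p q) := by
    rw [hsplit, map_add, map_sum]
    congr 1
    apply Finset.sum_congr rfl; intro p _
    rw [map_sum]
    apply Finset.sum_congr rfl; intro q _
    rw [_root_.map_smul, smul_eq_mul]
  have hR : ∑ p, ∑ q ∈ Finset.univ.erase p, (B p q * B q p) * fderiv ℝ ψ a (T p q) ≤ 0 := by
    apply Finset.sum_nonpos; intro p _
    apply Finset.sum_nonpos; intro q hq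
    have hqp : q ≠ p := Finset.ne_of_mem_erase hq
    have hBsym : B q p = B p q := hη.apply p q
    have hBB : 0 ≤ B p q * B q p := by rw [hBsym]; exact mul_self_nonneg _
    exact mul_nonpos_of_nonneg_of_nonpos hBB (hToff p q hqp)
  rw [hmain, hsum]
  linarith

end Stmt14Aux

/-- Let `Γ ⊆ ℝⁿ` be open, convex, invariant under coordinate
permutations; `ψ` of class `C²` on the open `U ⊆ ℝ^m` with `(p₁(κ),…,p_m(κ)) ∈ U` for
all `κ ∈ Γ`; `F(A) = ψ(P₁(A),…,P_m(A))` and `f(κ) = ψ(p₁(κ),…,p_m(κ))`. Let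
`S⁻¹ A S = diagonal κ` with `κ ∈ Γ` having pairwise distinct entries and let `η` be
such that `S⁻¹ η S` is symmetric. If `f` is concave on `Γ` then `d²F(A)(η,η) ≤ 0`; if
`f` is convex on `Γ` then `d²F(A)(η,η) ≥ 0`. -/
theorem stmt_14 (n m : ℕ) (Γ : Set (Fin n → ℝ)) (hΓopen : IsOpen Γ)
    (hΓconv : Convex ℝ Γ)
    (hΓsym : ∀ (π : Equiv.Perm (Fin n)), ∀ κ ∈ Γ, (fun i => κ (π i)) ∈ Γ)
    (U : Set (Fin m → ℝ)) (hU : IsOpen U)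
    (ψ : (Fin m → ℝ) → ℝ) (hψ : ContDiffOn ℝ 2 ψ U)
    (hΓU : ∀ κ ∈ Γ, pvec n m κ ∈ U)
    (A : Matrix (Fin n) (Fin n) ℝ) (κ : Fin n → ℝ) (hκ : κ ∈ Γ)
    (hκdist : Function.Injective κ)
    (S : Matrix (Fin n) (Fin n) ℝ) (hS : IsUnit S)
    (hdiag : S⁻¹ * A * S = Matrix.diagonal κ)
    (η : Matrix (Fin n) (Fin n) ℝ) (hη : (S⁻¹ * η * S).IsSymm) :
    (ConcaveOn ℝ Γ (fun x : Fin n → ℝ => ψ (pvec n m x)) →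
      fderiv ℝ (fderiv ℝ (fun X : Matrix (Fin n) (Fin n) ℝ => ψ (Pvec n m X))) A η η
        ≤ 0) ∧
    (ConvexOn ℝ Γ (fun x : Fin n → ℝ => ψ (pvec n m x)) →
      0 ≤ fderiv ℝ (fderiv ℝ (fun X : Matrix (Fin n) (Fin n) ℝ => ψ (Pvec n m X))) A η η) := by
  constructor
  · intro hcon
    exact Stmt14Aux.master n m Γ hΓopen hΓsym U hU ψ hψ hΓU A κ hκ hκdist S hS hdiag η hη hcon
  · intro hconv
    have hneg := Stmt14Aux.master n m Γ hΓopen hΓsym U hU (fun y => -ψ y) hψ.neg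
      hΓU A κ hκ hκdist S hS hdiag η hη hconv.neg
    beta_reduce at hneg
    have e2 : fderiv ℝ (fun X : Matrix (Fin n) (Fin n) ℝ => -ψ (Pvec n m X))
        = fun X => -(fderiv ℝ (fun Y : Matrix (Fin n) (Fin n) ℝ => ψ (Pvec n m Y)) X) :=
      funext fun X => fderiv_neg
    rw [e2] at hneg
    have e3 : fderiv ℝ
          (fun X : Matrix (Fin n) (Fin n) ℝ =>
            -(fderiv ℝ (fun Y : Matrix (Fin n) (Fin n) ℝ => ψ (Pvec n m Y)) X)) A
        = -(fderiv ℝ (fderiv ℝ (fun Y : Matrix (Fin n) (Fin n) ℝ => ψ (Pvec n m Y))) A) :=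
      @fderiv_fun_neg ℝ _ _ _ _ _ ContinuousLinearMap.toNormedAddCommGroup
        ContinuousLinearMap.toNormedSpace
        (fderiv ℝ (fun Y : Matrix (Fin n) (Fin n) ℝ => ψ (Pvec n m Y))) A
    rw [e3] at hneg
    simp only [ContinuousLinearMap.neg_apply] at hneg
    linarith
end

section
/- Let Γ₊ = {κ ∈ ℝⁿ : κᵢ > 0 ∀i}, U ⊆ ℝ^m open with (p₁(κ),…,p_m(κ)) ∈ U for all κ ∈ Γ₊, ψ : U → ℝ be C¹, and suppose f(κ) = ψ(p₁(κ),…,p_m(κ)) is positive, strictly monotone (∂f/∂κᵢ > 0 on Γ₊ for all i), and homogeneous of degree one (f(λκ) = λf(κ) for all λ > 0, κ ∈ Γ₊). Let A be an n×n real matrix, diagonalisable with eigenvalues κ ∈ Γ₊ (so A is invertible), let g be symmetric positive definite with gA = Aᵀg, and set F(A) = ψ(P₁(A),…,P_m(A)), F'(A) = Σ_{l=1}^m l·∂_lψ(P₁(A),…,P_m(A))·A^{l−1}. Then for every n×n real matrix η, trace(F'(A) · (g⁻¹ηᵀg) · A⁻¹ · η) ≥ F(A)⁻¹ · (trace(F'(A)·η))².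 -/
open Matrix

attribute [local instance] Matrix.normedAddCommGroup Matrix.normedSpace

lemma pvec_hasFDerivAt (n m : ℕ) (κ : Fin n → ℝ) :
    HasFDerivAt (pvec n m) ((ContinuousLinearMap.pi
      (fun l : Fin m => ∑ i : Fin n, ((((l : ℕ) + 1 : ℝ)) * κ i ^ (l : ℕ)) •
        (ContinuousLinearMap.proj i : (Fin n → ℝ) →L[ℝ] ℝ))) : (Fin n → ℝ) →L[ℝ] (Fin m → ℝ)) κ := by
  have key : ∀ l : Fin m, HasFDerivAt (fun x : Fin n → ℝ => ∑ i, x i ^ ((l : ℕ) + 1))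
      (∑ i : Fin n, ((((l : ℕ) + 1 : ℝ)) * κ i ^ (l : ℕ)) •
        (ContinuousLinearMap.proj i : (Fin n → ℝ) →L[ℝ] ℝ)) κ := by
    intro l
    apply HasFDerivAt.fun_sum
    intro i _
    have h1 : HasFDerivAt (fun x : Fin n → ℝ => x i)
        (ContinuousLinearMap.proj i : (Fin n → ℝ) →L[ℝ] ℝ) κ := hasFDerivAt_apply i κ
    have h2 : HasDerivAt (fun t : ℝ => t ^ ((l : ℕ) + 1))
        ((((l : ℕ) + 1 : ℕ) : ℝ) * κ i ^ (l : ℕ)) (κ i) := by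
      simpa using hasDerivAt_pow ((l : ℕ) + 1) (κ i)
    have := h2.comp_hasFDerivAt κ h1
    simpa [smul_smul, Function.comp_def] using this
  exact hasFDerivAt_pi.2 key

-- decomposition of a vector into single basis
lemma vec_decomp {k : ℕ} (v : Fin k → ℝ) : v = ∑ l, v l • (Pi.single l 1 : Fin k → ℝ) := by
  ext j
  simp [Pi.single_apply]

lemma fderiv_apply_sum {k : ℕ} (L : (Fin k → ℝ) →L[ℝ] ℝ) (v : Fin k → ℝ) :
    L v = ∑ l, v l * L (Pi.single l 1) := by
  conv_lhs => rw [vec_decomp v]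
  rw [map_sum]
  simp [smul_eq_mul]

lemma chain_deriv (n m : ℕ) (U : Set (Fin m → ℝ)) (hU : IsOpen U)
    (ψ : (Fin m → ℝ) → ℝ) (hψ : ContDiffOn ℝ 1 ψ U)
    (μ : Fin n → ℝ) (hμU : pvec n m μ ∈ U) (i : Fin n) :
    fderiv ℝ (fun x : Fin n → ℝ => ψ (pvec n m x)) μ (Pi.single i 1)
      = ∑ l : Fin m, ((l : ℕ) + 1 : ℝ) * fderiv ℝ ψ (pvec n m μ) (Pi.single l 1) * μ i ^ (l : ℕ) := by
  have hψd : DifferentiableAt ℝ ψ (pvec n m μ) :=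
    (hψ.differentiableOn one_ne_zero).differentiableAt (hU.mem_nhds hμU)
  have hp := pvec_hasFDerivAt n m μ
  have hcomp := (hψd.hasFDerivAt.comp μ hp).fderiv
  rw [show (fun x : Fin n → ℝ => ψ (pvec n m x)) = ψ ∘ pvec n m from rfl, hcomp]
  simp only [ContinuousLinearMap.coe_comp', Function.comp_apply]
  have hLv : (ContinuousLinearMap.pi
      (fun l : Fin m => ∑ j : Fin n, ((((l : ℕ) + 1 : ℝ)) * μ j ^ (l : ℕ)) •
        (ContinuousLinearMap.proj j : (Fin n → ℝ) →L[ℝ] ℝ))) (Pi.single i 1)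
      = fun l : Fin m => ((l : ℕ) + 1 : ℝ) * μ i ^ (l : ℕ) := by
    ext l
    simp [ContinuousLinearMap.pi_apply, ContinuousLinearMap.sum_apply, Pi.single_apply,
      mul_ite, Finset.sum_ite_eq']
  rw [hLv, fderiv_apply_sum]
  refine Finset.sum_congr rfl fun l _ => by ring

lemma euler_rel (n m : ℕ) (U : Set (Fin m → ℝ)) (hU : IsOpen U)
    (ψ : (Fin m → ℝ) → ℝ) (hψ : ContDiffOn ℝ 1 ψ U)
    (hhom : ∀ (lam : ℝ), 0 < lam → ∀ κ : Fin n → ℝ, (∀ i, 0 < κ i) →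
      ψ (pvec n m (lam • κ)) = lam * ψ (pvec n m κ))
    (μ : Fin n → ℝ) (hμ : ∀ i, 0 < μ i) (hμU : pvec n m μ ∈ U) :
    ∑ i, μ i * fderiv ℝ (fun x : Fin n → ℝ => ψ (pvec n m x)) μ (Pi.single i 1)
      = ψ (pvec n m μ) := by
  set f : (Fin n → ℝ) → ℝ := fun x => ψ (pvec n m x) with hf
  have hψd : DifferentiableAt ℝ ψ (pvec n m μ) :=
    (hψ.differentiableOn one_ne_zero).differentiableAt (hU.mem_nhds hμU)
  have hfd : DifferentiableAt ℝ f μ :=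
    hψd.comp μ (pvec_hasFDerivAt n m μ).differentiableAt
  have h1 : HasDerivAt (fun t : ℝ => t • μ) μ 1 := by
    simpa using (hasDerivAt_id (1 : ℝ)).smul_const μ
  have h2 : HasDerivAt (fun t : ℝ => f (t • μ)) (fderiv ℝ f μ μ) 1 := by
    have hfd' : HasFDerivAt f (fderiv ℝ f μ) ((1 : ℝ) • μ) := by
      rw [one_smul]; exact hfd.hasFDerivAt
    exact hfd'.comp_hasDerivAt (1 : ℝ) h1
  have h3 : (fun t : ℝ => f (t • μ)) =ᶠ[nhds (1 : ℝ)] (fun t : ℝ => t * f μ) := by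
    filter_upwards [isOpen_Ioi.mem_nhds (by norm_num : (1 : ℝ) ∈ Set.Ioi (0 : ℝ))] with t ht
    exact hhom t ht μ hμ
  have h4 : HasDerivAt (fun t : ℝ => t * f μ) (f μ) 1 := hasDerivAt_mul_const (f μ)
  have h5 : HasDerivAt (fun t : ℝ => f (t • μ)) (f μ) 1 := h4.congr_of_eventuallyEq h3
  have h6 : fderiv ℝ f μ μ = f μ := h2.unique h5
  show _ = f μ
  rw [← h6, fderiv_apply_sum]

section MatrixHelpers
variable {N : ℕ}

lemma conj_pow15 (Q Q' X : Matrix (Fin N) (Fin N) ℝ) (h : Q * Q' = 1) (h' : Q' * Q = 1) (k : ℕ) :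
    (Q * X * Q') ^ k = Q * X ^ k * Q' := by
  induction k with
  | zero => simp [h]
  | succ k ih =>
    rw [pow_succ, ih, pow_succ]
    calc Q * X ^ k * Q' * (Q * X * Q') = Q * X ^ k * (Q' * Q) * X * Q' := by
          simp only [Matrix.mul_assoc]
      _ = Q * (X ^ k * X) * Q' := by rw [h']; simp only [Matrix.mul_one, Matrix.mul_assoc]

lemma det_smul_one_sub_conj (Q Q' X : Matrix (Fin N) (Fin N) ℝ) (h : Q * Q' = 1) (c : ℝ) :
    (c • (1 : Matrix (Fin N) (Fin N) ℝ) - Q * X * Q').det = (c • 1 - X).det := by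
  have key : c • (1 : Matrix (Fin N) (Fin N) ℝ) - Q * X * Q' = Q * (c • 1 - X) * Q' := by
    rw [Matrix.mul_sub, Matrix.sub_mul, Matrix.mul_smul, Matrix.mul_one, Matrix.smul_mul, h]
  rw [key, Matrix.det_mul, Matrix.det_mul]
  have : Q.det * Q'.det = 1 := by rw [← Matrix.det_mul, h, Matrix.det_one]
  calc Q.det * (c • (1 : Matrix (Fin N) (Fin N) ℝ) - X).det * Q'.det
      = (c • (1 : Matrix (Fin N) (Fin N) ℝ) - X).det * (Q.det * Q'.det) := by ring
    _ = _ := by rw [this, mul_one]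

lemma cs_ineq (a μ : Fin N → ℝ) (z : Matrix (Fin N) (Fin N) ℝ)
    (ha : ∀ i, 0 < a i) (hμ : ∀ i, 0 < μ i) :
    (∑ i, a i * z i i) ^ 2
      ≤ (∑ i, a i * μ i) * (∑ i, ∑ j, a i * z j i * ((μ j)⁻¹ * z j i)) := by
  set x : Fin N → ℝ := fun i => Real.sqrt (a i * μ i) with hx
  set y : Fin N → ℝ := fun i => Real.sqrt (a i / μ i) * z i i with hy
  have hxy : ∀ i, x i * y i = a i * z i i := by
    intro i
    have hai := ha i; have hmi := hμ i
    have h1 : Real.sqrt (a i * μ i) * Real.sqrt (a i / μ i) = a i := by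
      rw [← Real.sqrt_mul (by positivity)]
      rw [show a i * μ i * (a i / μ i) = a i ^ 2 by field_simp]
      exact Real.sqrt_sq hai.le
    simp only [hx, hy]
    calc Real.sqrt (a i * μ i) * (Real.sqrt (a i / μ i) * z i i)
        = Real.sqrt (a i * μ i) * Real.sqrt (a i / μ i) * z i i := by ring
      _ = a i * z i i := by rw [h1]
  have hcs := Finset.sum_mul_sq_le_sq_mul_sq Finset.univ x y
  have hx2 : ∀ i, x i ^ 2 = a i * μ i := fun i =>
    Real.sq_sqrt (mul_nonneg (ha i).le (hμ i).le)
  have hy2 : ∀ i, y i ^ 2 = a i / μ i * z i i ^ 2 := by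
    intro i
    simp only [hy, mul_pow]
    rw [Real.sq_sqrt (div_nonneg (ha i).le (hμ i).le)]
  have hdiag : ∑ i, a i / μ i * z i i ^ 2
      ≤ ∑ i, ∑ j, a i * z j i * ((μ j)⁻¹ * z j i) := by
    apply Finset.sum_le_sum
    intro i _
    have hsingle : a i / μ i * z i i ^ 2 = a i * z i i * ((μ i)⁻¹ * z i i) := by
      rw [div_eq_mul_inv]; ring
    rw [hsingle]
    exact Finset.single_le_sum (f := fun j => a i * z j i * ((μ j)⁻¹ * z j i))
      (fun j _ => by
        show (0:ℝ) ≤ a i * z j i * ((μ j)⁻¹ * z j i)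
        have : a i * z j i * ((μ j)⁻¹ * z j i) = a i * (μ j)⁻¹ * z j i ^ 2 := by ring
        rw [this]
        have := ha i; have := hμ j
        positivity) (Finset.mem_univ i)
  calc (∑ i, a i * z i i) ^ 2 = (∑ i, x i * y i) ^ 2 := by
        rw [Finset.sum_congr rfl fun i _ => (hxy i).symm]
    _ ≤ (∑ i, x i ^ 2) * (∑ i, y i ^ 2) := hcs
    _ = (∑ i, a i * μ i) * (∑ i, a i / μ i * z i i ^ 2) := by
        rw [Finset.sum_congr rfl fun i _ => hx2 i, Finset.sum_congr rfl fun i _ => hy2 i]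
    _ ≤ (∑ i, a i * μ i) * (∑ i, ∑ j, a i * z j i * ((μ j)⁻¹ * z j i)) := by
        apply mul_le_mul_of_nonneg_left hdiag
        exact Finset.sum_nonneg fun i _ => mul_nonneg (ha i).le (hμ i).le

end MatrixHelpers

open scoped MatrixOrder in
lemma sqrt_exists15 {N : ℕ} (g : Matrix (Fin N) (Fin N) ℝ) (hg : g.PosDef) :
    ∃ r : Matrix (Fin N) (Fin N) ℝ, r * r = g ∧ r.IsHermitian :=
  ⟨CFC.sqrt g, CFC.sqrt_mul_sqrt_self g hg.posSemidef.nonneg, (CFC.sqrt_nonneg g).posSemidef.1⟩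

/-- Let `Γ₊ = {κ | ∀ i, κ i > 0}`, `ψ` of class `C¹` on the open
`U ⊆ ℝ^m` with `(p₁(κ),…,p_m(κ)) ∈ U` for all `κ ∈ Γ₊`, and suppose
`f(κ) = ψ(p₁(κ),…,p_m(κ))` is positive, strictly monotone and homogeneous of degree
one on `Γ₊`. If `A` is diagonalisable with eigenvalues `κ ∈ Γ₊` and `g`-selfadjoint
for a symmetric positive definite `g`, then for every matrix `η`,
`trace (F'(A) (g⁻¹ ηᵀ g) A⁻¹ η) ≥ F(A)⁻¹ (trace (F'(A) η))²`. -/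
theorem stmt_15 (n m : ℕ) (U : Set (Fin m → ℝ)) (hU : IsOpen U)
    (ψ : (Fin m → ℝ) → ℝ) (hψ : ContDiffOn ℝ 1 ψ U)
    (hΓU : ∀ κ : Fin n → ℝ, (∀ i, 0 < κ i) → pvec n m κ ∈ U)
    (hpos : ∀ κ : Fin n → ℝ, (∀ i, 0 < κ i) → 0 < ψ (pvec n m κ))
    (hmono : ∀ κ : Fin n → ℝ, (∀ i, 0 < κ i) → ∀ i : Fin n,
      0 < fderiv ℝ (fun x : Fin n → ℝ => ψ (pvec n m x)) κ (Pi.single i 1))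
    (hhom : ∀ (lam : ℝ), 0 < lam → ∀ κ : Fin n → ℝ, (∀ i, 0 < κ i) →
      ψ (pvec n m (lam • κ)) = lam * ψ (pvec n m κ))
    (A : Matrix (Fin n) (Fin n) ℝ) (κ : Fin n → ℝ) (hκ : ∀ i, 0 < κ i)
    (S : Matrix (Fin n) (Fin n) ℝ) (hS : IsUnit S)
    (hdiag : S⁻¹ * A * S = Matrix.diagonal κ)
    (g : Matrix (Fin n) (Fin n) ℝ) (hg : g.PosDef) (hgsym : g.IsSymm)
    (hsa : g * A = Aᵀ * g) :
    ∀ η : Matrix (Fin n) (Fin n) ℝ,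
      (Fprime n m ψ A * (g⁻¹ * ηᵀ * g) * A⁻¹ * η).trace
        ≥ (ψ (Pvec n m A))⁻¹ * ((Fprime n m ψ A * η).trace) ^ 2 := by
  intro η
  classical
  -- S facts
  have hSdet : IsUnit S.det := (Matrix.isUnit_iff_isUnit_det S).mp hS
  have hSS : S * S⁻¹ = 1 := Matrix.mul_nonsing_inv S hSdet
  have hSS' : S⁻¹ * S = 1 := Matrix.nonsing_inv_mul S hSdet
  have hA_eq : A = S * Matrix.diagonal κ * S⁻¹ := by
    have h1 : S * (S⁻¹ * A * S) * S⁻¹ = A := by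
      calc S * (S⁻¹ * A * S) * S⁻¹ = (S * S⁻¹) * A * (S * S⁻¹) := by
            simp only [Matrix.mul_assoc]
        _ = A := by rw [hSS, Matrix.one_mul, Matrix.mul_one]
    rw [← h1, hdiag]
  -- square root of g
  obtain ⟨r, hrr, hrherm⟩ := sqrt_exists15 g hg
  have hrsym : rᵀ = r := by
    have := hrherm
    rwa [Matrix.IsHermitian, Matrix.conjTranspose_eq_transpose_of_trivial] at this
  have hrdetu : IsUnit r.det := by
    have hdd : r.det * r.det = g.det := by rw [← Matrix.det_mul, hrr]
    have hgd : g.det ≠ 0 := hg.det_pos.ne'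
    refine isUnit_iff_ne_zero.mpr fun h0 => hgd ?_
    rw [← hdd, h0, zero_mul]
  have hr1 : r * r⁻¹ = 1 := Matrix.mul_nonsing_inv r hrdetu
  have hr1' : r⁻¹ * r = 1 := Matrix.nonsing_inv_mul r hrdetu
  have hrinvsym : (r⁻¹)ᵀ = r⁻¹ := by rw [Matrix.transpose_nonsing_inv, hrsym]
  have cr : ∀ X : Matrix (Fin n) (Fin n) ℝ, r * (r⁻¹ * X) = X := fun X => by
    rw [← Matrix.mul_assoc, hr1, Matrix.one_mul]
  have cr' : ∀ X : Matrix (Fin n) (Fin n) ℝ, r⁻¹ * (r * X) = X := fun X => by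
    rw [← Matrix.mul_assoc, hr1', Matrix.one_mul]
  -- the symmetrized matrix B
  set B : Matrix (Fin n) (Fin n) ℝ := r * A * r⁻¹ with hBdef
  have hgA : Aᵀ * (r * r) = r * r * A := by rw [hrr, ← hsa]
  have hB : B.IsHermitian := by
    rw [Matrix.IsHermitian, Matrix.conjTranspose_eq_transpose_of_trivial]
    show (r * A * r⁻¹)ᵀ = r * A * r⁻¹
    rw [Matrix.transpose_mul, Matrix.transpose_mul, hrinvsym, hrsym]
    -- goal : r⁻¹ * (Aᵀ * r) = r * A * r⁻¹
    have e1 : r⁻¹ * (Aᵀ * (r * r)) * r⁻¹ = r⁻¹ * (Aᵀ * r) := by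
      calc r⁻¹ * (Aᵀ * (r * r)) * r⁻¹ = r⁻¹ * (Aᵀ * (r * (r * r⁻¹))) := by
            simp only [Matrix.mul_assoc]
        _ = r⁻¹ * (Aᵀ * r) := by rw [hr1, Matrix.mul_one]
    have e2 : r⁻¹ * (Aᵀ * (r * r)) * r⁻¹ = r * A * r⁻¹ := by
      rw [hgA]
      calc r⁻¹ * (r * r * A) * r⁻¹ = r⁻¹ * (r * (r * A)) * r⁻¹ := by
            simp only [Matrix.mul_assoc]
        _ = r * A * r⁻¹ := by rw [cr']
    rw [← e1, e2]
  -- spectral theorem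
  set O : Matrix (Fin n) (Fin n) ℝ := (hB.eigenvectorUnitary : Matrix (Fin n) (Fin n) ℝ)
    with hOdef
  set μ : Fin n → ℝ := hB.eigenvalues with hμdef
  have hOstar : (star O) = Oᵀ := by
    rw [Matrix.star_eq_conjTranspose, Matrix.conjTranspose_eq_transpose_of_trivial]
  have hOO : O * Oᵀ = 1 := by
    have := (Matrix.mem_unitaryGroup_iff).mp hB.eigenvectorUnitary.2
    rwa [hOstar] at this
  have hOO' : Oᵀ * O = 1 := by
    have := (Matrix.mem_unitaryGroup_iff').mp hB.eigenvectorUnitary.2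
    rwa [hOstar] at this
  have hspec : B = O * Matrix.diagonal μ * Oᵀ := by
    have := hB.spectral_theorem
    simp only [Unitary.conjStarAlgAut_apply, Unitary.coe_star, ← hOdef, hOstar] at this
    simpa using this
  -- the conjugating pair
  set Q : Matrix (Fin n) (Fin n) ℝ := r⁻¹ * O with hQdef
  set Q' : Matrix (Fin n) (Fin n) ℝ := Oᵀ * r with hQ'def
  set D : Matrix (Fin n) (Fin n) ℝ := Matrix.diagonal μ with hDdef
  have hQQ' : Q * Q' = 1 := by
    calc r⁻¹ * O * (Oᵀ * r) = r⁻¹ * (O * Oᵀ) * r := by simp only [Matrix.mul_assoc]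
      _ = 1 := by rw [hOO, Matrix.mul_one, hr1']
  have hQ'Q : Q' * Q = 1 := by
    calc Oᵀ * r * (r⁻¹ * O) = Oᵀ * (r * r⁻¹) * O := by simp only [Matrix.mul_assoc]
      _ = 1 := by rw [hr1, Matrix.mul_one, hOO']
  have cQ : ∀ X : Matrix (Fin n) (Fin n) ℝ, Q * (Q' * X) = X := fun X => by
    rw [← Matrix.mul_assoc, hQQ', Matrix.one_mul]
  have cQ' : ∀ X : Matrix (Fin n) (Fin n) ℝ, Q' * (Q * X) = X := fun X => by
    rw [← Matrix.mul_assoc, hQ'Q, Matrix.one_mul]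
  have hAQ : A = Q * D * Q' := by
    have : r⁻¹ * B * r = A := by
      rw [hBdef]
      calc r⁻¹ * (r * A * r⁻¹) * r = r⁻¹ * (r * (A * (r⁻¹ * r))) := by
            simp only [Matrix.mul_assoc]
        _ = A := by rw [hr1', Matrix.mul_one, cr']
    rw [← this, hspec]
    simp only [hQdef, hQ'def, Matrix.mul_assoc]
  -- eigenvalues of B are among the κ's, hence positive
  have hμpos : ∀ i, 0 < μ i := by
    intro i
    have d1 : (μ i • (1 : Matrix (Fin n) (Fin n) ℝ) - A).det = (μ i • 1 - D).det := by
      rw [hAQ]; exact det_smul_one_sub_conj Q Q' D hQQ' (μ i)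
    have d2 : (μ i • (1 : Matrix (Fin n) (Fin n) ℝ) - A).det
        = (μ i • 1 - Matrix.diagonal κ).det := by
      rw [hA_eq]; exact det_smul_one_sub_conj S S⁻¹ (Matrix.diagonal κ) hSS (μ i)
    have hdet0 : (μ i • (1 : Matrix (Fin n) (Fin n) ℝ) - D).det = 0 := by
      rw [hDdef, Matrix.smul_one_eq_diagonal, Matrix.diagonal_sub, Matrix.det_diagonal]
      exact Finset.prod_eq_zero (Finset.mem_univ i) (sub_self (μ i))
    have hprod : ∏ j, (μ i - κ j) = 0 := by
      have := d2.symm.trans (d1.trans hdet0)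
      rwa [Matrix.smul_one_eq_diagonal, Matrix.diagonal_sub, Matrix.det_diagonal] at this
    obtain ⟨j, _, hj⟩ := Finset.prod_eq_zero_iff.mp hprod
    have : μ i = κ j := by linarith [sub_eq_zero.mp hj]
    rw [this]; exact hκ j
  -- power traces
  have hPvec : Pvec n m A = pvec n m μ := by
    funext l
    show (A ^ ((l : ℕ) + 1)).trace = ∑ i, μ i ^ ((l : ℕ) + 1)
    rw [hAQ, conj_pow15 Q Q' D hQQ' hQ'Q, Matrix.trace_mul_cycle, hQ'Q, Matrix.one_mul,
      hDdef, Matrix.diagonal_pow, Matrix.trace_diagonal]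
    simp [Pi.pow_apply]
  -- coefficients
  set c : Fin m → ℝ := fun l => fderiv ℝ ψ (Pvec n m A) (Pi.single l 1) with hcdef
  set φ : Fin n → ℝ := fun i => ∑ l : Fin m, ((l : ℕ) + 1 : ℝ) * c l * μ i ^ (l : ℕ)
    with hφdef
  have hμU : pvec n m μ ∈ U := hΓU μ hμpos
  have hφ_eq : ∀ i, φ i = fderiv ℝ (fun x : Fin n → ℝ => ψ (pvec n m x)) μ (Pi.single i 1) := by
    intro i
    rw [chain_deriv n m U hU ψ hψ μ hμU i, hφdef]
    simp only [hcdef, hPvec]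
  have hφ_pos : ∀ i, 0 < φ i := fun i => (hφ_eq i).symm ▸ hmono μ hμpos i
  have hEuler : ∑ i, μ i * φ i = ψ (pvec n m μ) := by
    rw [Finset.sum_congr rfl fun i _ => by rw [hφ_eq i]]
    exact euler_rel n m U hU ψ hψ hhom μ hμpos hμU
  set M : Matrix (Fin n) (Fin n) ℝ := Matrix.diagonal φ with hMdef
  -- F'(A) = Q M Q'
  have hFp : Fprime n m ψ A = Q * M * Q' := by
    rw [Fprime]
    have step1 : ∀ l : Fin m,
        (((l : ℕ) + 1 : ℝ) * c l) • A ^ (l : ℕ)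
          = Q * ((((l : ℕ) + 1 : ℝ) * c l) • D ^ (l : ℕ)) * Q' := by
      intro l
      rw [hAQ, conj_pow15 Q Q' D hQQ' hQ'Q, Matrix.mul_smul, Matrix.smul_mul]
    calc ∑ l : Fin m, (((l : ℕ) + 1 : ℝ) * c l) • A ^ (l : ℕ)
        = ∑ l : Fin m, Q * ((((l : ℕ) + 1 : ℝ) * c l) • D ^ (l : ℕ)) * Q' :=
          Finset.sum_congr rfl fun l _ => step1 l
      _ = Q * (∑ l : Fin m, (((l : ℕ) + 1 : ℝ) * c l) • D ^ (l : ℕ)) * Q' := by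
          rw [Finset.mul_sum, Finset.sum_mul]
      _ = Q * M * Q' := by
          congr 1
          congr 1
          rw [hMdef]
          ext i j
          rw [Matrix.sum_apply]
          by_cases hij : i = j
          · subst hij
            simp [hDdef, Matrix.diagonal_pow, Matrix.diagonal_apply_eq, hφdef, Finset.mul_sum]
          · simp [hDdef, Matrix.diagonal_pow, Matrix.diagonal_apply_ne _ hij, hij]
  -- the transformed variation
  set ζ : Matrix (Fin n) (Fin n) ℝ := Q' * η * Q with hζdef
  have cO : ∀ X : Matrix (Fin n) (Fin n) ℝ, O * (Oᵀ * X) = X := fun X => by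
    rw [← Matrix.mul_assoc, hOO, Matrix.one_mul]
  have cO' : ∀ X : Matrix (Fin n) (Fin n) ℝ, Oᵀ * (O * X) = X := fun X => by
    rw [← Matrix.mul_assoc, hOO', Matrix.one_mul]
  have hginv : g⁻¹ * ηᵀ * g = Q * ζᵀ * Q' := by
    have hgi : g⁻¹ = r⁻¹ * r⁻¹ := by rw [← hrr, Matrix.mul_inv_rev]
    rw [hgi, ← hrr, hζdef]
    simp only [Matrix.transpose_mul, hQdef, hQ'def, hrsym, hrinvsym,
      Matrix.transpose_transpose, Matrix.mul_assoc, cO, cO', cr, cr']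
  have hAinv : A⁻¹ = Q * D⁻¹ * Q' := by
    have hQinv : Q⁻¹ = Q' := Matrix.inv_eq_right_inv hQQ'
    have hQ'inv : Q'⁻¹ = Q := Matrix.inv_eq_right_inv hQ'Q
    rw [hAQ, Matrix.mul_inv_rev (Q * D) Q', Matrix.mul_inv_rev Q D, hQinv, hQ'inv,
      Matrix.mul_assoc Q D⁻¹ Q']
  have hDinv : D⁻¹ = Matrix.diagonal (fun i => (μ i)⁻¹) := by
    refine Matrix.inv_eq_right_inv ?_
    rw [hDdef, Matrix.diagonal_mul_diagonal, ← Matrix.diagonal_one]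
    have hfun : (fun i => μ i * (μ i)⁻¹) = fun _ : Fin n => (1 : ℝ) :=
      funext fun i => mul_inv_cancel₀ (hμpos i).ne'
    rw [hfun]
  -- trace computations
  have htrdiag : ∀ X : Matrix (Fin n) (Fin n) ℝ, (M * X).trace = ∑ i, φ i * X i i := by
    intro X
    simp [hMdef, Matrix.trace, Matrix.diag, Matrix.diagonal_mul]
  have hLHS : (Fprime n m ψ A * (g⁻¹ * ηᵀ * g) * A⁻¹ * η).trace
      = ∑ i, ∑ j, φ i * (ζ j i * ((μ j)⁻¹ * ζ j i)) := by
    rw [hFp, hginv, hAinv]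
    have hexp : Q * M * Q' * (Q * ζᵀ * Q') * (Q * D⁻¹ * Q') * η
        = Q * (M * (ζᵀ * (D⁻¹ * (Q' * η)))) := by
      simp only [Matrix.mul_assoc, cQ, cQ']
    rw [hexp, Matrix.trace_mul_comm]
    have hexp2 : M * (ζᵀ * (D⁻¹ * (Q' * η))) * Q = M * (ζᵀ * (D⁻¹ * ζ)) := by
      rw [hζdef]
      simp only [Matrix.mul_assoc]
    rw [hexp2, htrdiag]
    refine Finset.sum_congr rfl fun i _ => ?_
    rw [Matrix.mul_apply, Finset.mul_sum]
    refine Finset.sum_congr rfl fun j _ => ?_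
    rw [hDinv, Matrix.transpose_apply, Matrix.diagonal_mul]
  have hRHS : (Fprime n m ψ A * η).trace = ∑ i, φ i * ζ i i := by
    rw [hFp]
    have hexp : Q * M * Q' * η = Q * (M * (Q' * η)) := by simp only [Matrix.mul_assoc]
    rw [hexp, Matrix.trace_mul_comm]
    have hexp2 : M * (Q' * η) * Q = M * ζ := by
      rw [hζdef]; simp only [Matrix.mul_assoc]
    rw [hexp2, htrdiag]
  -- conclusion
  rw [ge_iff_le, hLHS, hRHS, hPvec, ← hEuler]
  have hT : 0 < ∑ i, μ i * φ i := by
    rw [hEuler]; exact hpos μ hμpos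
  rw [inv_mul_le_iff₀ hT]
  have := cs_ineq φ μ ζ hφ_pos hμpos
  calc (∑ i, φ i * ζ i i) ^ 2
      ≤ (∑ i, φ i * μ i) * (∑ i, ∑ j, φ i * ζ j i * ((μ j)⁻¹ * ζ j i)) := this
    _ = (∑ i, μ i * φ i) * (∑ i, ∑ j, φ i * (ζ j i * ((μ j)⁻¹ * ζ j i))) := by
        rw [Finset.sum_congr rfl fun i _ => mul_comm (φ i) (μ i)]
        congr 1
        exact Finset.sum_congr rfl fun i _ => Finset.sum_congr rfl fun j _ => by ring
end
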